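/- arXiv:1809.00568 — 8 statements merged into one kernel-verified Lean document; each statement's English description precedes it below -/
import Mathlib

section
/- Let C be a λ-constacyclic code of length n over F_q with gcd(n,q)=1, let r be the multiplicative order of λ in F_q^*, let m be the multiplicative order of q modulo rn, and let θ be a primitive rn-th root of unity in F_{q^m} satisfying θ^n = λ. If there exist integers h and δ ≥ 2 such that every codeword (c_1,...,c_n) ∈ C satisfies c_1 + c_2 θ^{(1+ri)} + ⋯ + c_n θ^{(1+ri)(n-1)} = 0 for all i = h, h+1, ..., h+δ-2, then the minimum Hamming distance of C is at least δ. (BCH bound for constacyclic codes.) -/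
open Finset

/-- The `k`-Galois dual of a linear code `C ⊆ F_q^n`, where `q = p^e`:
`C^{⊥_k} = {x | ∀ c ∈ C, ∑ i, c i * (x i)^(p^k) = 0}`. -/
def galoisDual (p k : ℕ) [Fact p.Prime] {F : Type*} [Field F] [CharP F p] {n : ℕ}
    (C : Submodule F (Fin n → F)) : Submodule F (Fin n → F) where
  carrier := {x | ∀ c ∈ C, ∑ i, c i * x i ^ p ^ k = 0}
  zero_mem' := fun c _ => by
    simp [zero_pow (pow_pos (Nat.Prime.pos (Fact.out : p.Prime)) k).ne']
  add_mem' := by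
    intro x y hx hy c hc
    have hpow : ∀ i : Fin n, (x + y) i ^ p ^ k = x i ^ p ^ k + y i ^ p ^ k := fun i => by
      simpa using add_pow_char_pow (x i) (y i) p k
    calc ∑ i, c i * (x + y) i ^ p ^ k
        = ∑ i, (c i * x i ^ p ^ k + c i * y i ^ p ^ k) := by
          refine Finset.sum_congr rfl fun i _ => by rw [hpow i, mul_add]
      _ = 0 := by
          rw [Finset.sum_add_distrib, hx c hc, hy c hc, add_zero]
  smul_mem' := by
    intro a x hx c hc
    calc ∑ i, c i * (a • x) i ^ p ^ k
        = a ^ p ^ k * ∑ i, c i * x i ^ p ^ k := by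
          rw [Finset.mul_sum]
          refine Finset.sum_congr rfl fun i _ => by
            simp only [Pi.smul_apply, smul_eq_mul, mul_pow]; ring
      _ = 0 := by rw [hx c hc, mul_zero]

/-- A linear code `C` is a `k`-Galois LCD code if `C ∩ C^{⊥_k} = {0}`. -/
def IsGaloisLCD (p k : ℕ) [Fact p.Prime] {F : Type*} [Field F] [CharP F p] {n : ℕ}
    (C : Submodule F (Fin n → F)) : Prop :=
  C ⊓ galoisDual p k C = ⊥

/-- `C` has minimum Hamming distance `d`. -/
def IsMinDist {F : Type*} [Field F] [DecidableEq F] {n : ℕ}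
    (C : Submodule F (Fin n → F)) (d : ℕ) : Prop :=
  (∃ x ∈ C, x ≠ 0 ∧ hammingNorm x = d) ∧ ∀ x ∈ C, x ≠ 0 → d ≤ hammingNorm x

/-- `C` is an MDS code: the trivial code `{0}` counts as MDS, otherwise
the minimum distance is `n - dim C + 1`. -/
def IsMDS {F : Type*} [Field F] [DecidableEq F] {n : ℕ} (C : Submodule F (Fin n → F)) : Prop :=
  C = ⊥ ∨ IsMinDist C (n - Module.finrank F C + 1)

/-- `C` is `λ`-constacyclic: `(λ c_n, c_1, …, c_{n-1}) ∈ C` whenever `(c_1, …, c_n) ∈ C`. -/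
def IsConstacyclic {F : Type*} [Field F] {n : ℕ} (lam : F) (C : Submodule F (Fin n → F)) : Prop :=
  ∀ c ∈ C, (fun i : Fin n => if (i : ℕ) = 0 then lam * c ⟨n - 1, by have := i.isLt; omega⟩
    else c ⟨(i : ℕ) - 1, by have := i.isLt; omega⟩) ∈ C

/-- The Euclidean dual of a linear code. -/
def euclideanDual {F : Type*} [Field F] {n : ℕ}
    (C : Submodule F (Fin n → F)) : Submodule F (Fin n → F) where
  carrier := {x | ∀ c ∈ C, ∑ i, c i * x i = 0}
  zero_mem' := fun c _ => by simp
  add_mem' := by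
    intro x y hx hy c hc
    calc ∑ i, c i * (x + y) i = ∑ i, (c i * x i + c i * y i) := by
          refine Finset.sum_congr rfl fun i _ => by simp [mul_add]
      _ = 0 := by rw [Finset.sum_add_distrib, hx c hc, hy c hc, add_zero]
  smul_mem' := by
    intro a x hx c hc
    calc ∑ i, c i * (a • x) i = a * ∑ i, c i * x i := by
          rw [Finset.mul_sum]
          refine Finset.sum_congr rfl fun i _ => by
            simp only [Pi.smul_apply, smul_eq_mul]; ring
      _ = 0 := by rw [hx c hc, mul_zero]

/-- The coordinatewise `p^m`-power map `x ↦ (x_i^{p^m})_i`, as a semilinear map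
with respect to the iterated Frobenius. -/
def frobPowMap (p m : ℕ) [Fact p.Prime] (F : Type*) [Field F] [CharP F p] (n : ℕ) :
    (Fin n → F) →ₛₗ[iterateFrobenius F p m] (Fin n → F) where
  toFun x := fun i => x i ^ p ^ m
  map_add' x y := funext fun i => by simpa using add_pow_char_pow (x i) (y i) p m
  map_smul' a x := funext fun i => by
    simp [iterateFrobenius_def, mul_pow]

/-- **BCH bound for constacyclic codes.**  Let `C` be a `λ`-constacyclic code of length `n`
over `F_q` (`q = p^e`, `gcd(n,q) = 1`), let `r` be the multiplicative order of `λ`,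
`m` the multiplicative order of `q` modulo `rn`, and `θ ∈ F_{q^m}` a primitive `rn`-th
root of unity with `θ^n = λ`.  If for some `h` and `δ ≥ 2` every codeword vanishes at
`θ^{1+ri}` for `i = h, …, h + δ - 2`, then the minimum distance of `C` is at least `δ`. -/
theorem bch_bound_constacyclic
    (p e n r m : ℕ) [Fact p.Prime] (he : 0 < e)
    (F E : Type*) [Field F] [Fintype F] [DecidableEq F] [Field E] [Fintype E] [Algebra F E]
    (hF : Fintype.card F = p ^ e) (hE : Fintype.card E = (p ^ e) ^ m)
    (hn : Nat.Coprime n (p ^ e))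
    (lam : F) (hlam : lam ≠ 0) (hr : orderOf lam = r)
    (hm0 : 0 < m) (hm1 : (p ^ e) ^ m ≡ 1 [MOD r * n])
    (hm2 : ∀ m', 0 < m' → (p ^ e) ^ m' ≡ 1 [MOD r * n] → m ≤ m')
    (θ : E) (hθ : IsPrimitiveRoot θ (r * n)) (hθn : θ ^ n = algebraMap F E lam)
    (C : Submodule F (Fin n → F)) (hC : IsConstacyclic lam C)
    (h δ : ℕ) (hδ : 2 ≤ δ)
    (hroots : ∀ c ∈ C, ∀ i : ℕ, h ≤ i → i ≤ h + (δ - 2) →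
      ∑ j : Fin n, algebraMap F E (c j) * θ ^ ((1 + r * i) * (j : ℕ)) = 0) :
    ∀ x ∈ C, x ≠ 0 → δ ≤ hammingNorm x := by

  classical
  intro x hx hx0
  by_contra hcon
  push_neg at hcon
  -- Basic positivity facts
  have hq1 : 1 < p ^ e := Nat.one_lt_pow he.ne' (Fact.out : p.Prime).one_lt
  have hn0 : 0 < n := by
    rcases Nat.eq_zero_or_pos n with h0 | h0
    · exfalso; rw [h0] at hn; rw [Nat.coprime_zero_left] at hn; omega
    · exact h0
  have hr0 : 0 < r := by
    have hu : IsUnit lam := isUnit_iff_ne_zero.mpr hlam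
    have h1 : orderOf (hu.unit : F) = orderOf hu.unit := orderOf_units
    rw [← hr, ← hu.unit_spec, h1]
    exact orderOf_pos hu.unit
  have hrn0 : 0 < r * n := Nat.mul_pos hr0 hn0
  have hθ0 : θ ≠ 0 := by
    intro h0
    have := hθ.pow_eq_one
    rw [h0, zero_pow hrn0.ne'] at this
    exact zero_ne_one this
  -- θ^r is a primitive n-th root of unity
  have hζ : IsPrimitiveRoot (θ ^ r) n := hθ.pow hrn0 rfl
  -- the support of x
  set s : Finset (Fin n) := Finset.univ.filter (fun i => x i ≠ 0) with hs
  have hcard : s.card = hammingNorm x := by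
    simp [hammingNorm, hs]
  set w := s.card with hw
  let e : { a // a ∈ s } ≃ Fin w := s.equivFin
  let ι : Fin w → Fin n := fun t => (e.symm t : Fin n)
  have hιmem : ∀ t, ι t ∈ s := fun t => (e.symm t).2
  have hιx : ∀ t, x (ι t) ≠ 0 := by
    intro t
    have := hιmem t
    rw [hs, Finset.mem_filter] at this
    exact this.2
  have hιinj : Function.Injective ι :=
    Subtype.val_injective.comp e.symm.injective
  -- the Vandermonde data
  set γ : Fin w → E := fun t => θ ^ (r * ((ι t : ℕ))) with hγ
  have hγinj : Function.Injective γ := by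
    intro t₁ t₂ hE12
    apply hιinj
    have h1 : γ t₁ = (θ ^ r) ^ ((ι t₁ : ℕ)) := pow_mul θ r _
    have h2 : γ t₂ = (θ ^ r) ^ ((ι t₂ : ℕ)) := pow_mul θ r _
    have := hζ.pow_inj (ι t₁).isLt (ι t₂).isLt (by rw [← h1, ← h2, hE12])
    exact Fin.ext this
  set b : Fin w → E := fun t =>
    algebraMap F E (x (ι t)) * θ ^ ((1 + r * h) * ((ι t : ℕ))) with hb
  -- each power-sum vanishes
  have hsum : ∀ i : Fin w, ∑ t, b t * γ t ^ (i : ℕ) = 0 := by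
    intro i
    have hile : (i : ℕ) ≤ δ - 2 := by
      have := i.isLt
      omega
    have h0 := hroots x hx (h + (i : ℕ)) (Nat.le_add_right _ _) (by omega)
    set f : Fin n → E := fun j =>
      algebraMap F E (x j) * θ ^ ((1 + r * (h + (i : ℕ))) * (j : ℕ)) with hf
    have hfs : ∑ j ∈ s, f j = 0 := by
      rw [hs]
      rw [Finset.sum_filter_of_ne]
      · exact h0
      · intro j _ hfj
        intro hxj
        apply hfj
        rw [hf]
        simp [hxj]
    have hcoe : ∑ t : Fin w, f (ι t) = ∑ j ∈ s, f j := by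
      rw [← Finset.sum_coe_sort s f]
      exact Equiv.sum_comp e.symm (fun a => f (a : Fin n))
    have hterm : ∀ t : Fin w, f (ι t) = b t * γ t ^ (i : ℕ) := by
      intro t
      rw [hf, hb, hγ]
      rw [mul_assoc, ← pow_mul, ← pow_add]
      congr 2
      ring
    calc ∑ t, b t * γ t ^ (i : ℕ) = ∑ t, f (ι t) := by
          exact Finset.sum_congr rfl fun t _ => (hterm t).symm
      _ = 0 := by rw [hcoe, hfs]
  -- Vandermonde: b = 0
  have hb0 : b = 0 := Matrix.eq_zero_of_forall_pow_sum_mul_pow_eq_zero hγinj hsum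
  -- but the support is nonempty, contradiction
  obtain ⟨j, hj⟩ : ∃ j, x j ≠ 0 := by
    by_contra hall
    push_neg at hall
    exact hx0 (funext hall)
  have hjs : j ∈ s := by rw [hs]; simp [hj]
  set t0 : Fin w := e ⟨j, hjs⟩ with ht0
  have : b t0 ≠ 0 := by
    rw [hb]
    apply mul_ne_zero
    · intro h0
      exact hιx t0 (RingHom.injective (algebraMap F E) (by rw [h0, map_zero]))
    · exact pow_ne_zero _ hθ0
  rw [hb0] at this
  exact this rfl
end

section
/- Let C be a linear code of length n over F_q and let 0 ≤ k < e where q = p^e. Then C is a maximum distance separable (MDS) code if and only if its k-Galois dual C^{⊥_k} is an MDS code. -/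
open Finset

section Aux
open Module
variable {F : Type*} [Field F] {n : ℕ}

/-- dot pairing as a linear map into the dual -/
noncomputable def dotLin : (Fin n → F) →ₗ[F] Module.Dual F (Fin n → F) where
  toFun y :=
    { toFun := fun x => ∑ i, x i * y i
      map_add' := fun a b => by simp [add_mul, Finset.sum_add_distrib]
      map_smul' := fun r a => by simp [Finset.mul_sum, mul_assoc] }
  map_add' y z := LinearMap.ext fun x => by simp [mul_add, Finset.sum_add_distrib]
  map_smul' r y := LinearMap.ext fun x => by
    simp only [LinearMap.coe_mk, AddHom.coe_mk, RingHom.id_apply, LinearMap.smul_apply,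
      smul_eq_mul, Finset.mul_sum]
    exact Finset.sum_congr rfl fun i _ => by simp [smul_eq_mul]; ring

lemma dotLin_surj : Function.Surjective (dotLin (F := F) (n := n)) := by
  intro phi
  refine ⟨fun i => phi (fun j => if i = j then 1 else 0), ?_⟩
  refine LinearMap.ext fun x => ?_
  show ∑ i, x i * phi (fun j => if i = j then 1 else 0) = phi x
  rw [LinearMap.pi_apply_eq_sum_univ phi x]
  exact Finset.sum_congr rfl fun i _ => (smul_eq_mul ..).symm

lemma finrank_euclideanDual (C : Submodule F (Fin n → F)) :
    finrank F (euclideanDual C) = n - finrank F C := by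
  let M : (Fin n → F) →ₗ[F] Module.Dual F ↥C := (C.subtype.dualMap).comp dotLin
  have hker : LinearMap.ker M = euclideanDual C := by
    ext x
    constructor
    · intro h c hc
      exact LinearMap.congr_fun (LinearMap.mem_ker.mp h) ⟨c, hc⟩
    · intro h
      refine LinearMap.mem_ker.mpr (LinearMap.ext fun c => ?_)
      exact h c c.2
  have hsurj : Function.Surjective M :=
    (LinearMap.dualMap_surjective_of_injective C.injective_subtype).comp dotLin_surj
  have h1 := LinearMap.finrank_range_add_finrank_ker M
  rw [LinearMap.range_eq_top.mpr hsurj, hker, finrank_top, Subspace.dual_finrank_eq,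
    Module.finrank_pi, Fintype.card_fin] at h1
  omega

lemma le_bidual (C : Submodule F (Fin n → F)) : C ≤ euclideanDual (euclideanDual C) := by
  intro c hc y hy
  have := hy c hc
  rw [← this]
  exact Finset.sum_congr rfl fun i _ => mul_comm _ _

lemma euclideanDual_euclideanDual (C : Submodule F (Fin n → F)) :
    euclideanDual (euclideanDual C) = C := by
  refine (Submodule.eq_of_le_of_finrank_le (le_bidual C) ?_).symm
  rw [finrank_euclideanDual, finrank_euclideanDual]
  omega

lemma euclideanDual_bot : euclideanDual (⊥ : Submodule F (Fin n → F)) = ⊤ := by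
  refine eq_top_iff.mpr fun x _ c hc => ?_
  rw [Submodule.mem_bot] at hc
  simp [hc]

variable [DecidableEq F]

lemma hammingNorm_le_of_zero_on (x : Fin n → F) (S : Finset (Fin n))
    (h : ∀ i ∈ S, x i = 0) : hammingNorm x ≤ n - S.card := by
  have hsub : ({i | x i ≠ 0} : Finset (Fin n)) ⊆ Sᶜ := by
    intro i hi
    rw [Finset.mem_compl]
    intro hiS
    exact (Finset.mem_filter.mp hi).2 (h i hiS)
  calc hammingNorm x ≤ #Sᶜ := Finset.card_le_card hsub
    _ = n - S.card := by rw [Finset.card_compl, Fintype.card_fin]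

/-- restriction of a code to a coordinate set -/
noncomputable def restr (S : Finset (Fin n)) (C : Submodule F (Fin n → F)) :
    ↥C →ₗ[F] (↥S → F) :=
  (LinearMap.funLeft F F (Subtype.val : ↥S → Fin n)).comp C.subtype

lemma restr_apply (S : Finset (Fin n)) (C : Submodule F (Fin n → F)) (x : ↥C) (j : ↥S) :
    restr S C x j = (x : Fin n → F) (j : Fin n) := rfl

lemma restr_injective (C : Submodule F (Fin n → F)) (S : Finset (Fin n)) (w : ℕ)
    (hmin : ∀ x ∈ C, x ≠ 0 → w ≤ hammingNorm x) (hw : n - S.card < w) :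
    Function.Injective (restr S C) := by
  rw [← LinearMap.ker_eq_bot]
  rw [Submodule.eq_bot_iff]
  intro z hz
  by_contra hz0
  have hx0 : (z : Fin n → F) ≠ 0 := by
    intro h
    exact hz0 (Subtype.ext h)
  have hv : ∀ i ∈ S, (z : Fin n → F) i = 0 := fun i hi =>
    congrFun (LinearMap.mem_ker.mp hz) ⟨i, hi⟩
  have h1 := hammingNorm_le_of_zero_on (z : Fin n → F) S hv
  have h2 := hmin (z : Fin n → F) z.2 hx0
  omega

lemma finrank_le_length (D : Submodule F (Fin n → F)) : finrank F D ≤ n := by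
  have := Submodule.finrank_le D
  rwa [Module.finrank_pi, Fintype.card_fin] at this

lemma exists_low_weight (D : Submodule F (Fin n → F)) (hD : D ≠ ⊥) :
    ∃ x ∈ D, x ≠ 0 ∧ hammingNorm x ≤ n - finrank F D + 1 := by
  by_contra hcon
  push_neg at hcon
  set m := finrank F D with hm
  have : Nontrivial ↥D := Submodule.nontrivial_iff_ne_bot.mpr hD
  have hm1 : 1 ≤ m := Module.finrank_pos
  have hmn : m ≤ n := finrank_le_length D
  obtain ⟨S, -, hScard⟩ := Finset.exists_subset_card_eq (s := (Finset.univ : Finset (Fin n))) (n := m - 1)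
    (by rw [Finset.card_univ, Fintype.card_fin]; omega)
  have hinj := restr_injective D S (n - m + 2)
    (fun x hx hx0 => by have := hcon x hx hx0; omega) (by omega)
  have hle := LinearMap.finrank_le_finrank_of_injective hinj
  rw [Module.finrank_pi, Fintype.card_coe, hScard] at hle
  omega

lemma dual_min (C : Submodule F (Fin n → F))
    (hmin : ∀ x ∈ C, x ≠ 0 → n - finrank F C + 1 ≤ hammingNorm x) :
    ∀ y ∈ euclideanDual C, y ≠ 0 → finrank F C + 1 ≤ hammingNorm y := by
  set l := finrank F C with hl
  intro y hy hy0
  by_contra h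
  push_neg at h
  have hln : l ≤ n := finrank_le_length C
  set T : Finset (Fin n) := {i | y i ≠ 0} with hT
  have hTcard : T.card ≤ l := by
    have : hammingNorm y = T.card := rfl
    omega
  obtain ⟨T', hTT', hT'card⟩ := Finset.exists_superset_card_eq hTcard
    (by rw [Fintype.card_fin]; omega)
  have hinj := restr_injective C T' (n - l + 1) hmin (by omega)
  have hsurj : Function.Surjective (restr T' C) := by
    refine (LinearMap.injective_iff_surjective_of_finrank_eq_finrank ?_).mp hinj
    rw [Module.finrank_pi, Fintype.card_coe, hT'card]
  obtain ⟨i0, hi0⟩ : ∃ i, y i ≠ 0 := Function.ne_iff.mp hy0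
  have hi0T' : i0 ∈ T' := hTT' (by simp [hT, hi0])
  obtain ⟨x, hx⟩ := hsurj (fun j => if (j : Fin n) = i0 then 1 else 0)
  have hsum := hy (x : Fin n → F) x.2
  have hkey : ∑ i, (x : Fin n → F) i * y i = y i0 := by
    rw [Finset.sum_eq_single_of_mem i0 (Finset.mem_univ i0)]
    · have hxi0 : (x : Fin n → F) i0 = 1 := by
        have := congrFun hx ⟨i0, hi0T'⟩
        rw [restr_apply] at this
        simpa using this
      rw [hxi0, one_mul]
    · intro b _ hb
      by_cases hyb : y b = 0
      · rw [hyb, mul_zero]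
      · have hbT' : b ∈ T' := hTT' (by simp [hT, hyb])
        have hxb := congrFun hx ⟨b, hbT'⟩
        rw [restr_apply] at hxb
        simp only [hb, if_false] at hxb
        rw [hxb, zero_mul]
  rw [hsum] at hkey
  exact hi0 hkey.symm

lemma isMDS_top : IsMDS (⊤ : Submodule F (Fin n → F)) := by
  rcases Nat.eq_zero_or_pos n with hn | hn
  · left
    subst hn
    exact Subsingleton.elim _ _
  · right
    have hfr : finrank F (⊤ : Submodule F (Fin n → F)) = n := by
      rw [finrank_top, Module.finrank_pi, Fintype.card_fin]
    rw [hfr, Nat.sub_self]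
    set v : Fin n → F := Pi.single (⟨0, hn⟩ : Fin n) (1 : F) with hv
    have hnorm : hammingNorm v = 1 := by
      have hfilt : ({i | v i ≠ 0} : Finset (Fin n)) = {(⟨0, hn⟩ : Fin n)} := by
        ext i
        simp [hv, Pi.single_apply]
      show #({i | v i ≠ 0} : Finset (Fin n)) = 1
      rw [hfilt, Finset.card_singleton]
    constructor
    · refine ⟨v, Submodule.mem_top, ?_, hnorm⟩
      intro h
      rw [h] at hnorm
      simp [hammingNorm] at hnorm
    · intro x _ hx0
      rw [Nat.one_le_iff_ne_zero]
      exact fun h => hx0 (hammingNorm_eq_zero.mp h)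

lemma isMDS_euclideanDual_of (C : Submodule F (Fin n → F)) (h : IsMDS C) :
    IsMDS (euclideanDual C) := by
  rcases h with hbot | hmin
  · rw [hbot, euclideanDual_bot]
    exact isMDS_top
  · set l := finrank F C with hl
    have hln : l ≤ n := finrank_le_length C
    by_cases hD : euclideanDual C = ⊥
    · exact Or.inl hD
    · right
      have hfr : finrank F (euclideanDual C) = n - l := finrank_euclideanDual C
      have hdd : n - finrank F (euclideanDual C) + 1 = l + 1 := by rw [hfr]; omega
      rw [hdd]
      have hlb := dual_min C hmin.2
      constructor
      · obtain ⟨y, hy, hy0, hyle⟩ := exists_low_weight (euclideanDual C) hD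
        rw [hfr] at hyle
        exact ⟨y, hy, hy0, le_antisymm (by omega) (hlb y hy hy0)⟩
      · exact hlb

lemma isMDS_euclid_iff (C : Submodule F (Fin n → F)) :
    IsMDS C ↔ IsMDS (euclideanDual C) :=
  ⟨isMDS_euclideanDual_of C, fun h => by
    have := isMDS_euclideanDual_of _ h
    rwa [euclideanDual_euclideanDual] at this⟩

end Aux

/-- A linear code `C` of length `n` over `F_q` (`q = p^e`, `0 ≤ k < e`) is MDS
if and only if its `k`-Galois dual `C^{⊥_k}` is MDS. -/
theorem mds_iff_galoisDual_mds
    (p e k : ℕ) [Fact p.Prime] (hk : k < e)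
    (F : Type*) [Field F] [Fintype F] [DecidableEq F] [CharP F p]
    (hF : Fintype.card F = p ^ e)
    {n : ℕ} (C : Submodule F (Fin n → F)) :
    IsMDS C ↔ IsMDS (galoisDual p k C) := by
  classical
  have hp2 : 2 ≤ Fintype.card F := Fintype.one_lt_card
  have key : ∀ (a : F) (m₁ m₂ : ℕ), m₁ + m₂ = e → (a ^ p ^ m₁) ^ p ^ m₂ = a := by
    intro a m₁ m₂ hm
    rw [← pow_mul, ← pow_add, hm, ← hF, FiniteField.pow_card]
  have hpk : (0 : ℕ) < p ^ k := pow_pos (Fact.out : p.Prime).pos k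
  have hpm : (0 : ℕ) < p ^ (e - k) := pow_pos (Fact.out : p.Prime).pos _
  set Φ : (Fin n → F) → (Fin n → F) := fun y i => y i ^ p ^ k with hΦdef
  set Ψ : (Fin n → F) → (Fin n → F) := fun z i => z i ^ p ^ (e - k) with hΨdef
  have hΦΨ : ∀ z, Φ (Ψ z) = z := fun z => funext fun i => key (z i) (e - k) k (by omega)
  have hΨΦ : ∀ y, Ψ (Φ y) = y := fun y => funext fun i => key (y i) k (e - k) (by omega)
  have hmemG : ∀ y, y ∈ galoisDual p k C ↔ Φ y ∈ euclideanDual C := fun y => Iff.rfl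
  have hmemE : ∀ z, z ∈ euclideanDual C ↔ Ψ z ∈ galoisDual p k C := by
    intro z
    rw [hmemG, hΦΨ]
  have hnormΦ : ∀ y, hammingNorm (Φ y) = hammingNorm y := by
    intro y
    refine Finset.card_bij (fun i _ => i) ?_ (fun a b _ _ h => h) ?_
    · intro i hi
      rw [Finset.mem_filter] at hi ⊢
      exact ⟨hi.1, fun h => hi.2 (by simp [hΦdef, h, zero_pow hpk.ne'])⟩
    · intro i hi
      rw [Finset.mem_filter] at hi
      refine ⟨i, Finset.mem_filter.mpr ⟨hi.1, fun h => hi.2 ?_⟩, rfl⟩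
      exact pow_eq_zero_iff hpk.ne' |>.mp h |>.symm ▸ (by simp [hΦdef, (pow_eq_zero_iff hpk.ne').mp h])
  have hnormΨ : ∀ z, hammingNorm (Ψ z) = hammingNorm z := by
    intro z
    have := hnormΦ (Ψ z)
    rw [hΦΨ] at this
    exact this.symm
  have hΦ0 : ∀ y, Φ y = 0 ↔ y = 0 := by
    intro y
    constructor
    · intro h
      funext i
      exact (pow_eq_zero_iff hpk.ne').mp (congrFun h i)
    · intro h
      subst h
      funext i
      simp [hΦdef, zero_pow hpk.ne']
  have hΨ0 : ∀ z, Ψ z = 0 ↔ z = 0 := by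
    intro z
    constructor
    · intro h
      funext i
      exact (pow_eq_zero_iff hpm.ne').mp (congrFun h i)
    · intro h
      subst h
      funext i
      simp [hΨdef, zero_pow hpm.ne']
  -- equality of finrank of the two duals
  have hfrGE : Module.finrank F (galoisDual p k C) = Module.finrank F (euclideanDual C) := by
    have instG : Fintype ↥(galoisDual p k C) := Fintype.ofFinite _
    have instE : Fintype ↥(euclideanDual C) := Fintype.ofFinite _
    have equiv : ↥(galoisDual p k C) ≃ ↥(euclideanDual C) :=
      { toFun := fun y => ⟨Φ y, (hmemG y).mp y.2⟩
        invFun := fun z => ⟨Ψ z, (hmemE z).mp z.2⟩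
        left_inv := fun y => Subtype.ext (hΨΦ y)
        right_inv := fun z => Subtype.ext (hΦΨ z) }
    have h1 : Fintype.card ↥(galoisDual p k C) = Fintype.card ↥(euclideanDual C) :=
      Fintype.card_congr equiv
    rw [Module.card_eq_pow_finrank (K := F) (V := ↥(galoisDual p k C)),
      Module.card_eq_pow_finrank (K := F) (V := ↥(euclideanDual C))] at h1
    exact Nat.pow_right_injective hp2 h1
  have hbotGE : galoisDual p k C = ⊥ ↔ euclideanDual C = ⊥ := by
    constructor
    · intro h
      rw [Submodule.eq_bot_iff]
      intro z hz
      have := (hmemE z).mp hz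
      rw [h, Submodule.mem_bot] at this
      rw [← hΦΨ z, this]
      exact (hΦ0 0).mpr rfl
    · intro h
      rw [Submodule.eq_bot_iff]
      intro y hy
      have := (hmemG y).mp hy
      rw [h, Submodule.mem_bot] at this
      exact (hΦ0 y).mp this
  rw [isMDS_euclid_iff C]
  constructor
  · rintro (hE | hE)
    · exact Or.inl (hbotGE.mpr hE)
    · right
      have hd : n - Module.finrank F (galoisDual p k C) + 1
          = n - Module.finrank F (euclideanDual C) + 1 := by rw [hfrGE]
      rw [hd]
      obtain ⟨⟨x, hx, hx0, hxn⟩, hbd⟩ := hE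
      constructor
      · refine ⟨Ψ x, (hmemE x).mp hx, fun h => hx0 ((hΨ0 x).mp h), ?_⟩
        rw [hnormΨ x, hxn]
      · intro y hy hy0
        have := hbd (Φ y) ((hmemG y).mp hy) (fun h => hy0 ((hΦ0 y).mp h))
        rwa [hnormΦ y] at this
  · rintro (hG | hG)
    · exact Or.inl (hbotGE.mp hG)
    · right
      rw [← hfrGE]
      obtain ⟨⟨y, hy, hy0, hyn⟩, hbd⟩ := hG
      constructor
      · refine ⟨Φ y, (hmemG y).mp hy, fun h => hy0 ((hΦ0 y).mp h), ?_⟩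
        rw [hnormΦ y, hyn]
      · intro z hz hz0
        have := hbd (Ψ z) ((hmemE z).mp hz) (fun h => hz0 ((hΨ0 z).mp h))
        rwa [hnormΨ z] at this
end

section
/- Let C be a linear code of length n and dimension l over F_q with generator matrix G (an l × n matrix whose rows form a basis of C), and let 0 ≤ k < e where q = p^e. Then C is a k-Galois LCD code if and only if the l × l matrix G G^‡ is nonsingular, where G^‡ is the transpose of the matrix obtained from G by raising every entry to the power p^{e-k}. -/
open Finset

/-- A linear code `C` of length `n` and dimension `l` over `F_q` (`q = p^e`, `0 ≤ k < e`)
with generator matrix `G` is a `k`-Galois LCD code if and only if `G G^‡` is nonsingular,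
where `G^‡` is the transpose of the entrywise `p^{e-k}`-th power of `G`. -/
theorem galoisLCD_iff_det_ne_zero
    (p e k : ℕ) [Fact p.Prime] (hk : k < e)
    (F : Type*) [Field F] [Fintype F] [CharP F p]
    (hF : Fintype.card F = p ^ e)
    {n l : ℕ} (C : Submodule F (Fin n → F)) (hdim : Module.finrank F C = l)
    (G : Matrix (Fin l) (Fin n) F)
    (hGind : LinearIndependent F (fun i : Fin l => G i))
    (hGspan : C = Submodule.span F (Set.range (fun i : Fin l => G i))) :
    IsGaloisLCD p k C ↔ (G * (G.map (fun a => a ^ p ^ (e - k))).transpose).det ≠ 0 := by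
    classical
  have hp : p.Prime := Fact.out
  have hpk : p ^ k ≠ 0 := pow_ne_zero _ hp.pos.ne'
  have hpe : ∀ x : F, x ^ p ^ e = x := by
    intro x; rw [← hF]; exact FiniteField.pow_card x
  set M : Matrix (Fin l) (Fin l) F :=
    G * (G.map (fun a => a ^ p ^ (e - k))).transpose with hM
  set N : Matrix (Fin l) (Fin l) F :=
    Matrix.of (fun j t => ∑ i, G j i * G t i ^ p ^ k) with hN
  -- relation between determinants
  have hNM : N = (M.map (iterateFrobenius F p k)).transpose := by
    ext j t
    simp only [hN, hM, Matrix.of_apply, Matrix.transpose_apply, Matrix.map_apply,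
      Matrix.mul_apply]
    rw [map_sum (iterateFrobenius F p k) _ Finset.univ]
    simp only [iterateFrobenius_def, mul_pow, ← pow_mul]
    refine Finset.sum_congr rfl fun i _ => ?_
    have hee : p ^ (e - k) * p ^ k = p ^ e := by
      rw [← pow_add]; congr 1; omega
    rw [hee, hpe, mul_comm]
  have hdet : N.det = M.det ^ p ^ k := by
    have h2 := RingHom.map_det (iterateFrobenius F p k) M
    rw [RingHom.mapMatrix_apply] at h2
    rw [hNM, Matrix.det_transpose, ← h2, iterateFrobenius_def]
  have hdetiff : M.det ≠ 0 ↔ N.det ≠ 0 := by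
    rw [hdet, pow_ne_zero_iff hpk]
  -- membership in the dual is determined by the generators
  have dualmem : ∀ x : Fin n → F,
      x ∈ galoisDual p k C ↔ ∀ j : Fin l, ∑ i, G j i * x i ^ p ^ k = 0 := by
    intro x
    constructor
    · intro hx j
      exact hx (G j) (hGspan ▸ Submodule.subset_span ⟨j, rfl⟩)
    · intro h c hc
      let φ : (Fin n → F) →ₗ[F] F :=
        { toFun := fun c => ∑ i, c i * x i ^ p ^ k
          map_add' := fun a b => by
            simp [add_mul, Finset.sum_add_distrib]
          map_smul' := fun a b => by
            simp [Finset.mul_sum, mul_assoc] }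
      have hker : C ≤ LinearMap.ker φ := by
        rw [hGspan, Submodule.span_le]
        rintro _ ⟨j, rfl⟩
        exact h j
      exact hker hc
  -- key computation
  have key : ∀ (b : Fin l → F) (j : Fin l),
      ∑ i, G j i * (∑ t, b t • G t) i ^ p ^ k
        = N.mulVec (fun t => b t ^ p ^ k) j := by
    intro b j
    have step : ∀ i : Fin n, (∑ t, b t • G t) i ^ p ^ k
        = ∑ t, b t ^ p ^ k * G t i ^ p ^ k := by
      intro i
      have h1 : (∑ t, b t • G t) i = ∑ t, b t * G t i := by simp
      rw [h1, sum_pow_char_pow]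
      exact Finset.sum_congr rfl fun t _ => mul_pow _ _ _
    simp only [step, Finset.mul_sum, Matrix.mulVec, dotProduct, hN, Matrix.of_apply]
    rw [Finset.sum_comm]
    refine Finset.sum_congr rfl fun t _ => ?_
    rw [Finset.sum_mul]
    exact Finset.sum_congr rfl fun i _ => by ring
  constructor
  · -- LCD → det ≠ 0
    intro hLCD
    rw [hdetiff]
    intro hdet0
    obtain ⟨v, hv0, hvN⟩ := Matrix.exists_mulVec_eq_zero_iff.mpr hdet0
    set b : Fin l → F := fun t => v t ^ p ^ (e - k) with hb
    have hbk : (fun t => b t ^ p ^ k) = v := by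
      funext t
      rw [hb]
      show (v t ^ p ^ (e - k)) ^ p ^ k = v t
      rw [← pow_mul, ← pow_add]
      have hee : e - k + k = e := by omega
      rw [hee, hpe]
    set x : Fin n → F := ∑ t, b t • G t with hx
    have hxC : x ∈ C := by
      rw [hGspan]
      exact Submodule.sum_mem _ fun t _ =>
        Submodule.smul_mem _ _ (Submodule.subset_span ⟨t, rfl⟩)
    have hxD : x ∈ galoisDual p k C := by
      rw [dualmem]
      intro j
      rw [hx, key b j, hbk, hvN]
      rfl
    have hx0 : x = 0 := by
      have hmem : x ∈ C ⊓ galoisDual p k C := ⟨hxC, hxD⟩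
      rw [hLCD] at hmem
      simpa using hmem
    have hb0 : ∀ t, b t = 0 :=
      Fintype.linearIndependent_iff.mp hGind b (by rw [← hx, hx0])
    apply hv0
    funext t
    have hvt := congrFun hbk t
    rw [hb0 t] at hvt
    rw [← hvt]
    exact zero_pow hpk
  · -- det ≠ 0 → LCD
    intro hdet0
    rw [hdetiff] at hdet0
    rw [IsGaloisLCD, eq_bot_iff]
    intro x hx
    rw [Submodule.mem_inf] at hx
    obtain ⟨hxC, hxD⟩ := hx
    have hxC' := hxC
    rw [hGspan, Submodule.mem_span_range_iff_exists_fun] at hxC'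
    obtain ⟨b, hbx⟩ := hxC'
    have hmul : N.mulVec (fun t => b t ^ p ^ k) = 0 := by
      funext j
      have h1 := (dualmem x).mp hxD j
      rw [← hbx] at h1
      simpa using (key b j).symm.trans h1
    have hbk0 : (fun t => b t ^ p ^ k) = 0 := by
      by_contra h
      exact hdet0 (Matrix.exists_mulVec_eq_zero_iff.mp ⟨_, h, hmul⟩)
    have hb0 : b = 0 := by
      funext t
      have ht := congrFun hbk0 t
      simpa [pow_eq_zero_iff hpk] using ht
    simp only [Submodule.mem_bot]
    rw [← hbx, hb0]
    simp
end

section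
/- Let C be a linear code of length n and dimension l over F_q with parity check matrix H (an (n-l) × n matrix of rank n-l whose kernel is C), and let 0 ≤ k < e where q = p^e. Then rank(H H^‡) = n - l - dim(C ∩ C^{⊥_k}), where H^‡ is the transpose of the matrix obtained from H by raising every entry to the power p^{e-k}. -/
open Finset

open Matrix in
lemma mem_galoisDual_iff (p k : ℕ) [Fact p.Prime] {F : Type*} [Field F] [CharP F p] {n : ℕ}
    (C : Submodule F (Fin n → F)) (x : Fin n → F) :
    x ∈ galoisDual p k C ↔ ∀ c ∈ C, ∑ i, c i * x i ^ p ^ k = 0 := Iff.rfl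

section Aux
open Matrix Module

/-- The dot-product bilinear form on `Fin n → F`. -/
noncomputable def dotForm (F : Type*) [CommRing F] (n : ℕ) :
    LinearMap.BilinForm F (Fin n → F) :=
  LinearMap.mk₂ F (fun x y => ∑ i, x i * y i)
    (fun x x' y => by simp [add_mul, Finset.sum_add_distrib])
    (fun a x y => by simp [Finset.mul_sum, mul_assoc])
    (fun x y y' => by simp [mul_add, Finset.sum_add_distrib])
    (fun a x y => by
      simp only [Pi.smul_apply, smul_eq_mul, Finset.mul_sum]
      exact Finset.sum_congr rfl fun i _ => by ring)

lemma dotForm_apply {F : Type*} [CommRing F] {n : ℕ} (x y : Fin n → F) :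
    dotForm F n x y = ∑ i, x i * y i := rfl

lemma dotForm_nondegenerate (F : Type*) [Field F] (n : ℕ) :
    (dotForm F n).Nondegenerate := by
  constructor <;>
  · intro x hx
    funext i
    have := hx (Pi.single i 1)
    simpa [dotForm_apply, Pi.single_apply] using this

lemma dotForm_isRefl (F : Type*) [Field F] (n : ℕ) : (dotForm F n).IsRefl := by
  intro x y h
  simp only [dotForm_apply] at h ⊢
  rw [← h]
  exact Finset.sum_congr rfl fun i _ => mul_comm _ _

/-- For a full-row-rank matrix, the orthogonal complement of its kernel
is the range of its transpose. -/
lemma orthogonal_ker_eq_range_transpose {m n : ℕ} {F : Type*} [Field F]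
    (A : Matrix (Fin m) (Fin n) F) (h : A.rank = m) :
    (dotForm F n).orthogonal (LinearMap.ker A.mulVecLin)
      = LinearMap.range Aᵀ.mulVecLin := by
  have hle : LinearMap.range Aᵀ.mulVecLin
      ≤ (dotForm F n).orthogonal (LinearMap.ker A.mulVecLin) := by
    rintro x ⟨u, rfl⟩
    intro c hc
    have hc0 : A.mulVec c = 0 := by simpa using hc
    show dotForm F n c (Aᵀ.mulVecLin u) = 0
    simp only [dotForm_apply, Matrix.mulVecLin_apply, Matrix.mulVec, dotProduct,
      Matrix.transpose_apply, Finset.mul_sum]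
    rw [Finset.sum_comm]
    have : ∀ j, ∑ i, c i * (A j i * u j) = (A.mulVec c) j * u j := by
      intro j
      simp [Matrix.mulVec, dotProduct, Finset.sum_mul]
      exact Finset.sum_congr rfl fun i _ => by ring
    rw [Finset.sum_congr rfl fun j _ => this j, hc0]
    simp
  refine (Submodule.eq_of_le_of_finrank_le hle ?_).symm
  have hmn : m ≤ n := by rw [← h]; exact A.rank_le_card_width.trans (by simp)
  have h1 : finrank F (LinearMap.range A.mulVecLin) + finrank F (LinearMap.ker A.mulVecLin)
      = n := by
    rw [LinearMap.finrank_range_add_finrank_ker]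
    simp [Module.finrank_fin_fun]
  have h2 : finrank F (LinearMap.range A.mulVecLin) = m := h
  have h3 : finrank F (LinearMap.range Aᵀ.mulVecLin) = m := by
    show Aᵀ.rank = m
    rw [Matrix.rank_transpose]; exact h
  have h4 : finrank F ((dotForm F n).orthogonal (LinearMap.ker A.mulVecLin))
      = n - finrank F (LinearMap.ker A.mulVecLin) := by
    rw [LinearMap.BilinForm.finrank_orthogonal (dotForm_nondegenerate F n)]
    simp [Module.finrank_fin_fun]
  omega

end Aux

open Matrix

/-- If `H` is a parity check matrix of an `[n, l]` code `C` over `F_q` (`q = p^e`,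
`0 ≤ k < e`), then `rank (H H^‡) = n - l - dim (C ∩ C^{⊥_k})`, where `H^‡` is the
transpose of the entrywise `p^{e-k}`-th power of `H`. -/
theorem rank_parity_check_mul_dagger
    (p e k : ℕ) [Fact p.Prime] (hk : k < e)
    (F : Type*) [Field F] [Fintype F] [CharP F p]
    (hF : Fintype.card F = p ^ e)
    {n l : ℕ} (hln : l ≤ n) (C : Submodule F (Fin n → F)) (hdim : Module.finrank F C = l)
    (H : Matrix (Fin (n - l)) (Fin n) F)
    (hrank : H.rank = n - l)
    (hker : ∀ x : Fin n → F, x ∈ C ↔ H.mulVec x = 0) :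
    (H * (H.map (fun a => a ^ p ^ (e - k))).transpose).rank
      = n - l - Module.finrank F ↥(C ⊓ galoisDual p k C) := by
  classical
  have hp : 0 < p := (Fact.out : p.Prime).pos
  have key1 : ∀ a : F, (a ^ p ^ (e - k)) ^ p ^ k = a := by
    intro a
    rw [← pow_mul, ← pow_add, Nat.sub_add_cancel hk.le, ← hF, FiniteField.pow_card]
  have key2 : ∀ a : F, (a ^ p ^ k) ^ p ^ (e - k) = a := by
    intro a
    rw [← pow_mul, ← pow_add, Nat.add_sub_cancel' hk.le, ← hF, FiniteField.pow_card]
  have frobsum : ∀ (M : ℕ) (g : Fin (n - l) → F),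
      (∑ j, g j) ^ p ^ M = ∑ j, g j ^ p ^ M := by
    intro M g
    have h := map_sum (iterateFrobenius F p M) g Finset.univ
    simp only [iterateFrobenius_def] at h
    exact h
  set A := H.map (fun a => a ^ p ^ (e - k)) with hA
  set T := Aᵀ.mulVecLin with hT
  have hC : C = LinearMap.ker H.mulVecLin := by
    ext x; simp [hker x, Matrix.mulVecLin_apply]
  have hTpow : ∀ (v : Fin (n - l) → F) (i : Fin n),
      (Aᵀ.mulVec v) i ^ p ^ k = ∑ j, H j i * v j ^ p ^ k := by
    intro v i
    have h0 : (Aᵀ.mulVec v) i = ∑ j, (H j i) ^ p ^ (e - k) * v j := by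
      simp [Matrix.mulVec, dotProduct, hA, Matrix.transpose_apply, Matrix.map_apply]
    rw [h0, frobsum]
    exact Finset.sum_congr rfl fun j _ => by rw [mul_pow, key1]
  have hinjHT : Function.Injective Hᵀ.mulVecLin := by
    have hr : Module.finrank F (LinearMap.range Hᵀ.mulVecLin) = n - l := by
      show Hᵀ.rank = n - l
      rw [Matrix.rank_transpose]; exact hrank
    have hrn := LinearMap.finrank_range_add_finrank_ker (Hᵀ.mulVecLin)
    rw [hr, Module.finrank_fin_fun] at hrn
    have hker0 : LinearMap.ker Hᵀ.mulVecLin = ⊥ :=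
      Submodule.finrank_eq_zero.mp (by omega)
    exact LinearMap.ker_eq_bot.mp hker0
  have hTinj : Function.Injective T := by
    rw [← LinearMap.ker_eq_bot, Submodule.eq_bot_iff]
    intro v hv
    have hv0 : Aᵀ.mulVec v = 0 := hv
    have hz0 : Hᵀ.mulVecLin (fun j => v j ^ p ^ k) = Hᵀ.mulVecLin 0 := by
      rw [map_zero]
      funext i
      have h1 : (Hᵀ.mulVec (fun j => v j ^ p ^ k)) i = ∑ j, H j i * v j ^ p ^ k := by
        simp [Matrix.mulVec, dotProduct, Matrix.transpose_apply]
      show (Hᵀ.mulVec (fun j => v j ^ p ^ k)) i = 0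
      rw [h1, ← hTpow v i, hv0]
      simp only [Pi.zero_apply]
      exact zero_pow (pow_ne_zero k hp.ne')
    have hz : (fun j => v j ^ p ^ k) = (0 : Fin (n - l) → F) := hinjHT hz0
    funext j
    have := congrFun hz j
    simpa [pow_eq_zero_iff (pow_ne_zero k hp.ne')] using this
  have hrange : LinearMap.range T = galoisDual p k C := by
    apply le_antisymm
    · rintro x ⟨v, rfl⟩
      rw [mem_galoisDual_iff]
      intro c hc
      calc ∑ i, c i * (T v) i ^ p ^ k
          = ∑ i, c i * ∑ j, H j i * v j ^ p ^ k :=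
            Finset.sum_congr rfl fun i _ => by
              rw [show (T v) i = (Aᵀ.mulVec v) i from rfl, hTpow]
        _ = ∑ j, (H.mulVec c) j * v j ^ p ^ k := by
            simp only [Finset.mul_sum, Matrix.mulVec, dotProduct, Finset.sum_mul]
            rw [Finset.sum_comm]
            exact Finset.sum_congr rfl fun j _ => Finset.sum_congr rfl fun i _ => by ring
        _ = 0 := by rw [(hker c).mp hc]; simp
    · intro x hx
      rw [mem_galoisDual_iff] at hx
      have hy : (fun i => x i ^ p ^ k)
          ∈ (dotForm F n).orthogonal (LinearMap.ker H.mulVecLin) := by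
        intro c hc
        show dotForm F n c _ = 0
        rw [dotForm_apply]
        exact hx c (hC ▸ hc)
      rw [orthogonal_ker_eq_range_transpose H hrank] at hy
      obtain ⟨u, hu⟩ := hy
      refine ⟨fun j => u j ^ p ^ (e - k), ?_⟩
      funext i
      have h1 : (T fun j => u j ^ p ^ (e - k)) i = ∑ j, (H j i * u j) ^ p ^ (e - k) := by
        show (Aᵀ.mulVec fun j => u j ^ p ^ (e - k)) i = _
        simp only [Matrix.mulVec, dotProduct, Matrix.transpose_apply, hA,
          Matrix.map_apply, mul_pow]
      rw [h1, ← frobsum]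
      have h2 : ∑ j, H j i * u j = x i ^ p ^ k := by
        have h3 := congrFun hu i
        rw [Matrix.mulVecLin_apply] at h3
        rw [← h3]
        simp only [Matrix.mulVec, dotProduct, Matrix.transpose_apply]
      rw [h2, key2]
  have hkerM : LinearMap.ker (H * Aᵀ).mulVecLin
      = Submodule.comap T (LinearMap.ker H.mulVecLin) := by
    rw [Matrix.mulVecLin_mul, LinearMap.ker_comp]
  have hmap : Submodule.map T (LinearMap.ker (H * Aᵀ).mulVecLin) = C ⊓ galoisDual p k C := by
    rw [hkerM, Submodule.map_comap_eq, hrange, ← hC, inf_comm]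
  have hfr : Module.finrank F (LinearMap.ker (H * Aᵀ).mulVecLin)
      = Module.finrank F ↥(C ⊓ galoisDual p k C) := by
    rw [← hmap]
    exact (Submodule.equivMapOfInjective T hTinj _).finrank_eq
  have hrn := LinearMap.finrank_range_add_finrank_ker ((H * Aᵀ).mulVecLin)
  rw [Module.finrank_fin_fun] at hrn
  have hrankM : (H * Aᵀ).rank = Module.finrank F (LinearMap.range (H * Aᵀ).mulVecLin) := rfl
  show (H * Aᵀ).rank = n - l - Module.finrank F ↥(C ⊓ galoisDual p k C)
  omega
end

section
/- Let q = p^e, 0 ≤ k < e, let s = gcd(p^{e-k}+1, p^e-1) and write p^e - 1 = s·t. If n is a positive integer coprime to q with n ≤ q + 1, and 0 ≤ l < min{t, n}, then there exists a k-Galois LCD MDS code over F_q of length n, dimension n - l, and minimum Hamming distance l + 1. -/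
open Finset

section GaloisLCDProof

open Matrix Polynomial in
private lemma det_affine {F : Type*} [Field F] {m : ℕ} (N : Matrix (Fin m) (Fin m) F)
    (u w : Fin m → F) :
    ∃ α β : F, ∀ x : F,
      Matrix.det (Matrix.of fun a b => N a b + x * u a * w b) = α + β * x := by
  classical
  set f := (Matrix.detRowAlternating : (Fin m → F) [⋀^Fin m]→ₗ[F] F) with hf
  have key : ∀ s : Finset (Fin m), ∃ c d : F, ∀ x : F,
      f (s.piecewise (fun a => (x * u a) • w) N) = c + d * x := by
    intro s
    rcases Nat.lt_or_ge s.card 2 with hs | hs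
    · interval_cases h : s.card
      · refine ⟨f N, 0, fun x => ?_⟩
        rw [Finset.card_eq_zero.mp h]; erw [Finset.piecewise_empty]; ring
      · obtain ⟨a, ha⟩ := Finset.card_eq_one.mp h
        refine ⟨0, u a * f (Function.update N a w), fun x => ?_⟩
        rw [ha]; erw [Finset.piecewise_singleton]
        erw [f.map_update_smul, smul_eq_mul]
        ring
    · obtain ⟨a, ha, b, hb, hab⟩ := Finset.one_lt_card.mp hs
      refine ⟨0, 0, fun x => ?_⟩
      set v := s.piecewise (fun a => (x * u a) • w) N with hv
      have hva : v a = (x * u a) • w := Finset.piecewise_eq_of_mem _ _ _ ha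
      have hvb : v b = (x * u b) • w := Finset.piecewise_eq_of_mem _ _ _ hb
      have h1 : f v = (x * u a) • f (Function.update v a w) := by
        conv_lhs => rw [← Function.update_eq_self a v, hva]
        rw [f.map_update_smul]
      have h2 : f (Function.update v a w)
          = (x * u b) • f (Function.update (Function.update v a w) b w) := by
        conv_lhs => rw [← Function.update_eq_self b (Function.update v a w),
          Function.update_apply, if_neg hab.symm, hvb]
        rw [f.map_update_smul]
      have h3 : f (Function.update (Function.update v a w) b w) = 0 := by
        apply f.map_eq_zero_of_eq _ _ hab
        simp [Function.update_apply, hab, hab.symm]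
      rw [h1, h2, h3, smul_zero, smul_zero]; ring
  choose c d hcd using key
  refine ⟨∑ s : Finset (Fin m), c s, ∑ s : Finset (Fin m), d s, fun x => ?_⟩
  have harg : (fun a => ((x * u a) • w : Fin m → F)) + (fun a => N a)
      = Matrix.of fun a b => N a b + x * u a * w b := by
    funext a b
    simp [mul_assoc]
    ring
  have hdet : Matrix.det (Matrix.of fun a b => N a b + x * u a * w b)
      = f ((fun a => ((x * u a) • w : Fin m → F)) + (fun a => N a)) := by
    rw [harg]; rfl
  rw [hdet, ← f.coe_multilinearMap, f.toMultilinearMap.map_add_univ]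
  have : ∀ s : Finset (Fin m),
      f.toMultilinearMap (s.piecewise (fun a => (x * u a) • w) (fun a => N a)) = c s + d s * x := by
    intro s; exact hcd s x
  rw [Finset.sum_congr rfl fun s _ => this s]
  rw [Finset.sum_add_distrib, ← Finset.sum_mul]

private lemma exists_good_e {F : Type*} [Field F] {m n : ℕ} (hmn : m ≤ n)
    (A B : Matrix (Fin m) (Fin n) F) (Hset : Finset F)
    (hH0 : ∀ h ∈ Hset, h ≠ 0) (hHne : Hset.Nonempty)
    (hHcard : m < n → 2 ≤ Hset.card)
    (hA : ∀ τ : Fin m → Fin n, Function.Injective τ →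
      IsUnit (Matrix.det (Matrix.of fun a b => A a (τ b))))
    (hB : ∀ τ : Fin m → Fin n, Function.Injective τ →
      IsUnit (Matrix.det (Matrix.of fun a b => B a (τ b)))) :
    ∃ e : Fin n → F, (∀ i, e i ∈ Hset) ∧
      IsUnit (Matrix.det (Matrix.of fun a b => ∑ i, e i * A a i * B b i)) := by
  classical
  obtain ⟨S, hSu, hScard⟩ := Finset.exists_subset_card_eq (s := (univ : Finset (Fin n))) (n := m)
    (by simpa using hmn)
  obtain ⟨h0, hh0⟩ := hHne
  set τ : Fin m → Fin n := fun b => S.orderEmbOfFin hScard b with hτ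
  have hτinj : Function.Injective τ := (S.orderEmbOfFin hScard).injective
  have hSim : Finset.image τ univ = S := by
    ext i
    simp only [Finset.mem_image, Finset.mem_univ, true_and]
    constructor
    · rintro ⟨b, rfl⟩; exact Finset.orderEmbOfFin_mem S hScard b
    · intro hi
      have : i ∈ Set.range (S.orderEmbOfFin hScard) := by
        rw [Finset.range_orderEmbOfFin]; exact hi
      obtain ⟨b, hb⟩ := this
      exact ⟨b, hb⟩
  set e0 : Fin n → F := fun i => if i ∈ S then h0 else 0 with he0
  have hdet0 : IsUnit (Matrix.det (Matrix.of fun a b => ∑ i, e0 i * A a i * B b i)) := by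
    have hmat : (Matrix.of fun a b => ∑ i, e0 i * A a i * B b i)
        = h0 • ((Matrix.of fun a b' => A a (τ b')) *
            Matrix.transpose (Matrix.of fun b b' => B b (τ b'))) := by
      ext a b
      simp only [Matrix.smul_apply, Matrix.mul_apply, Matrix.transpose_apply, Matrix.of_apply,
        smul_eq_mul, Finset.mul_sum]
      calc ∑ i, e0 i * A a i * B b i
          = ∑ i, (if i ∈ S then h0 * (A a i * B b i) else 0) := by
            refine Finset.sum_congr rfl fun i _ => ?_
            by_cases hiS : i ∈ S <;> simp [he0, hiS] <;> ring
        _ = ∑ i ∈ S, h0 * (A a i * B b i) := by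
            rw [Finset.sum_ite_mem, Finset.univ_inter]
        _ = ∑ b', h0 * (A a (τ b') * B b (τ b')) := by
            rw [← hSim, Finset.sum_image (fun x _ y _ h => hτinj h)]
    rw [hmat, Matrix.det_smul, Matrix.det_mul, Matrix.det_transpose]
    simpa using ((isUnit_iff_ne_zero.mpr (hH0 _ hh0)).pow (Fintype.card (Fin m))).mul
      ((hA τ hτinj).mul (hB τ hτinj))
  rcases eq_or_lt_of_le hmn with heq | hlt
  · -- m = n : S is everything
    have hSuniv : S = univ := Finset.eq_univ_of_card S (by rw [hScard, heq]; simp)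
    refine ⟨e0, fun i => ?_, hdet0⟩
    simp [he0, hSuniv, hh0]
  have hcard2 : 2 ≤ Hset.card := hHcard hlt
  -- inductive repair of the coordinates not in S
  have main : ∀ T : Finset (Fin n), ∀ e : Fin n → F, (∀ i ∉ T, e i ∈ Hset) →
      IsUnit (Matrix.det (Matrix.of fun a b => ∑ i, e i * A a i * B b i)) →
      ∃ e' : Fin n → F, (∀ i, e' i ∈ Hset) ∧
        IsUnit (Matrix.det (Matrix.of fun a b => ∑ i, e' i * A a i * B b i)) := by
    intro T
    induction T using Finset.induction_on with
    | empty => intro e he hdet; exact ⟨e, fun i => he i (by simp), hdet⟩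
    | @insert i0 T hi0T IH =>
      intro e he hdet
      set N : Matrix (Fin m) (Fin m) F :=
        Matrix.of (fun a b => ∑ i ∈ univ.erase i0, e i * A a i * B b i) with hN
      obtain ⟨al, be, haff⟩ := det_affine N (fun a => A a i0) (fun b => B b i0)
      have hMval : ∀ x : F, (Matrix.of fun a b =>
          ∑ i, (Function.update e i0 x) i * A a i * B b i)
          = Matrix.of fun a b => N a b + x * A a i0 * B b i0 := by
        intro x
        ext a b
        simp only [Matrix.of_apply, hN]
        rw [← Finset.sum_erase_add _ _ (Finset.mem_univ i0)]
        congr 1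
        · refine Finset.sum_congr rfl fun i hi => ?_
          rw [Function.update_apply, if_neg (Finset.ne_of_mem_erase hi)]
        · rw [Function.update_self]
      have hupd : ∀ x : F,
          Matrix.det (Matrix.of fun a b => ∑ i, (Function.update e i0 x) i * A a i * B b i)
          = al + be * x := by
        intro x; rw [hMval x]; exact haff x
      have hex : ∃ x ∈ Hset, al + be * x ≠ 0 := by
        by_contra hno
        push_neg at hno
        obtain ⟨x1, hx1, x2, hx2, hx12⟩ := Finset.one_lt_card.mp hcard2
        have h1 := hno x1 hx1
        have h2 := hno x2 hx2
        have hbe : be = 0 := by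
          have : be * (x1 - x2) = 0 := by ring_nf; linear_combination h1 - h2
          rcases mul_eq_zero.mp this with h | h
          · exact h
          · exact absurd (sub_eq_zero.mp h) hx12
        have hal : al = 0 := by rw [hbe] at h1; simpa using h1
        have := hupd (e i0)
        rw [Function.update_eq_self] at this
        rw [this, hal, hbe] at hdet
        simp at hdet
      obtain ⟨x, hxH, hxne⟩ := hex
      refine IH (Function.update e i0 x) (fun i hiT => ?_) ?_
      · rcases eq_or_ne i i0 with rfl | hne
        · rwa [Function.update_self]
        · rw [Function.update_apply, if_neg hne]
          exact he i (by simp [hne, hiT])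
      · rw [hupd x]
        exact isUnit_iff_ne_zero.mpr hxne
  exact main (univ \ S) e0 (fun i hi => by
    have hiS : i ∈ S := by simpa using hi
    simp [he0, hiS, hh0]) hdet0

open Matrix in
private lemma vdm_unit {F : Type*} [Field F] {m : ℕ} (β : Fin m → F) (hβ : Function.Injective β) :
    IsUnit (Matrix.det (Matrix.of fun a b : Fin m => β b ^ (a : ℕ))) := by
  have : (Matrix.of fun a b : Fin m => β b ^ (a : ℕ)) = (Matrix.vandermonde β)ᵀ := by
    ext a b; simp [Matrix.vandermonde]
  rw [this, Matrix.det_transpose, Matrix.det_vandermonde, isUnit_iff_ne_zero]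
  rw [Finset.prod_ne_zero_iff]
  intro i _
  rw [Finset.prod_ne_zero_iff]
  intro j hj
  rw [sub_ne_zero]
  exact fun hc => absurd (hβ hc.symm) (by rintro rfl; simp at hj)

lemma vdm_ext_unit {F : Type*} [Field F] {q' m : ℕ} (α : Fin q' → F)
    (hα : Function.Injective α) (τ : Fin (m + 1) → Fin (q' + 1)) (hτ : Function.Injective τ) :
    IsUnit (Matrix.det (Matrix.of fun a b : Fin (m + 1) =>
      if h : (τ b : ℕ) < q' then α ⟨τ b, h⟩ ^ (a : ℕ) else if (a : ℕ) = m then 1 else 0)) := by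
  classical
  by_cases hall : ∀ b, (τ b : ℕ) < q'
  · have : (Matrix.of fun a b : Fin (m + 1) =>
        if h : (τ b : ℕ) < q' then α ⟨τ b, h⟩ ^ (a : ℕ) else if (a : ℕ) = m then 1 else 0)
        = Matrix.of fun a b : Fin (m + 1) => (fun b => α ⟨τ b, hall b⟩) b ^ (a : ℕ) := by
      ext a b; simp only [Matrix.of_apply]; rw [dif_pos (hall b)]
    rw [this]
    refine vdm_unit _ fun b1 b2 h => hτ ?_
    have := hα h
    simpa [Fin.ext_iff] using this
  · push_neg at hall
    obtain ⟨b0, hb0⟩ := hall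
    have hb0q : (τ b0 : ℕ) = q' := by have := (τ b0).isLt; omega
    set M : Matrix (Fin (m+1)) (Fin (m+1)) F := Matrix.of fun a b : Fin (m + 1) =>
      if h : (τ b : ℕ) < q' then α ⟨τ b, h⟩ ^ (a : ℕ) else if (a : ℕ) = m then 1 else 0 with hM
    set π : Equiv.Perm (Fin (m+1)) := Equiv.swap b0 (Fin.last m) with hπ
    have hdet : (M.submatrix id π).det = Equiv.Perm.sign π * M.det := Matrix.det_permute' π M
    suffices h : IsUnit (M.submatrix id π).det by
      rw [hdet] at h
      rcases Int.units_eq_one_or (Equiv.Perm.sign π) with hs | hs <;> rw [hs] at h <;>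
        simpa using h
    have hπlast : π (Fin.last m) = b0 := Equiv.swap_apply_right _ _
    have hπne : ∀ b : Fin m, π b.castSucc ≠ b0 := by
      intro b
      rcases eq_or_ne b.castSucc b0 with h | h
      · rw [h, hπ]
        rw [Equiv.swap_apply_left]
        intro hc
        rw [← hc] at h
        exact absurd h.symm (Fin.castSucc_lt_last b).ne'
      · rw [hπ, Equiv.swap_apply_of_ne_of_ne h (Fin.castSucc_lt_last b).ne]
        exact h
    have hτπ : ∀ b : Fin m, (τ (π b.castSucc) : ℕ) < q' := by
      intro b
      have h1 : τ (π b.castSucc) ≠ τ b0 := fun hc => hπne b (hτ hc)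
      have h2 : (τ (π b.castSucc) : ℕ) ≠ q' := fun hc => h1 (Fin.ext (by rw [hc, hb0q]))
      have := (τ (π b.castSucc)).isLt
      omega
    rw [Matrix.det_succ_column (M.submatrix id π) (Fin.last m)]
    rw [Finset.sum_eq_single (Fin.last m)]
    · have hentry : (M.submatrix id π) (Fin.last m) (Fin.last m) = 1 := by
        simp only [Matrix.submatrix_apply, id_eq, hπlast, hM, Matrix.of_apply]
        rw [dif_neg (by omega)]
        simp
      rw [hentry]
      have hsub : ((M.submatrix id π).submatrix (Fin.last m).succAbove (Fin.last m).succAbove)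
          = Matrix.of fun a b : Fin m => (fun b => α ⟨τ (π b.castSucc), hτπ b⟩) b ^ (a : ℕ) := by
        ext a b
        simp only [Matrix.submatrix_apply, Fin.succAbove_last, hM, Matrix.of_apply]
        rw [dif_pos (hτπ b)]
        simp
      rw [hsub]
      have hβinj : Function.Injective (fun b : Fin m => α ⟨τ (π b.castSucc), hτπ b⟩) := by
        intro b1 b2 h
        have := hα h
        have := hτ (Fin.ext (by simpa [Fin.ext_iff] using this))
        exact Fin.castSucc_injective m (π.injective this)
      have := vdm_unit _ hβinj
      have hsign : ((-1 : F)) ^ ((Fin.last m : ℕ) + (Fin.last m : ℕ)) = 1 := by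
        simp only [Fin.val_last]
        exact Even.neg_one_pow ⟨m, by ring⟩
      rw [hsign, one_mul, one_mul]
      exact this
    · intro i _ hi
      have hentry : (M.submatrix id π) i (Fin.last m) = 0 := by
        simp only [Matrix.submatrix_apply, id_eq, hπlast, hM, Matrix.of_apply]
        rw [dif_neg (by omega)]
        rw [if_neg]
        intro hc
        exact hi (Fin.ext (by simpa using hc))
      rw [hentry]
      ring
    · simp

open Polynomial in
private lemma card_le_pow_image {F : Type*} [Field F] [Fintype F] [DecidableEq F] (d s' : ℕ)
    (hs' : 0 < s') (hroot : ∀ y : F, y ≠ 0 → y ^ d = 1 → y ^ s' = 1) :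
    Fintype.card F - 1 ≤ s' * ((univ.erase (0 : F)).image (fun x => x ^ d)).card := by
  classical
  have hcard : (univ.erase (0 : F)).card = Fintype.card F - 1 := by
    rw [Finset.card_erase_of_mem (Finset.mem_univ _), Finset.card_univ]
  rw [← hcard]
  refine Finset.card_le_mul_card_image _ _ ?_
  intro a ha
  obtain ⟨x0, hx0mem, hx0⟩ := Finset.mem_image.mp ha
  have hx0ne : x0 ≠ 0 := Finset.ne_of_mem_erase hx0mem
  have hpoly : (X ^ s' - C (1 : F)) ≠ 0 := X_pow_sub_C_ne_zero hs' 1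
  calc ((univ.erase (0 : F)).filter fun x => x ^ d = a).card
      ≤ ((X ^ s' - C (1 : F)).roots.toFinset).card := by
        refine Finset.card_le_card_of_injOn (fun y => y * x0⁻¹) ?_ ?_
        · intro y hy
          rw [Finset.mem_coe, Finset.mem_filter] at hy
          obtain ⟨hy1, hy2⟩ := hy
          have hyne : y ≠ 0 := Finset.ne_of_mem_erase hy1
          have hz : (y * x0⁻¹) ^ d = 1 := by
            rw [mul_pow, inv_pow, hy2, ← hx0, mul_inv_cancel₀]
            exact pow_ne_zero _ hx0ne
          have hzs : (y * x0⁻¹) ^ s' = 1 :=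
            hroot _ (mul_ne_zero hyne (inv_ne_zero hx0ne)) hz
          rw [Finset.mem_coe, Multiset.mem_toFinset, mem_roots hpoly]
          simp [IsRoot, hzs]
        · intro y1 h1 y2 h2 h
          exact mul_right_cancel₀ (inv_ne_zero hx0ne) h
    _ ≤ s' := by
        refine le_trans (Multiset.toFinset_card_le _) ?_
        refine le_trans (Polynomial.card_roots' _) ?_
        rw [natDegree_X_pow_sub_C]

private lemma main_construction (p k : ℕ) [Fact p.Prime] {F : Type*} [Field F] [Fintype F]
    [DecidableEq F] [CharP F p] {m n : ℕ} (hm1 : 1 ≤ m) (hmn : m ≤ n)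
    (A : Matrix (Fin m) (Fin n) F)
    (hA : ∀ τ : Fin m → Fin n, Function.Injective τ →
      IsUnit (Matrix.det (Matrix.of fun a b => A a (τ b))))
    (hB : ∀ τ : Fin m → Fin n, Function.Injective τ →
      IsUnit (Matrix.det (Matrix.of fun a b => (A a (τ b)) ^ p ^ k)))
    (Hset : Finset F)
    (hHmem : ∀ h ∈ Hset, ∃ v : F, v ≠ 0 ∧ v ^ (p ^ k + 1) = h)
    (hHne : Hset.Nonempty) (hHcard : m < n → 2 ≤ Hset.card) :
    ∃ C : Submodule F (Fin n → F),
      IsGaloisLCD p k C ∧ Module.finrank F C = m ∧ IsMinDist C (n - m + 1) := by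
  classical
  set B : Matrix (Fin m) (Fin n) F := Matrix.of fun b i => A b i ^ p ^ k with hBdef
  have hBt : ∀ τ : Fin m → Fin n, Function.Injective τ →
      IsUnit (Matrix.det (Matrix.of fun a b => B a (τ b))) := hB
  have hH0 : ∀ h ∈ Hset, h ≠ 0 := by
    intro h hh
    obtain ⟨v, hv0, hv⟩ := hHmem h hh
    exact hv ▸ pow_ne_zero _ hv0
  obtain ⟨e, he, hdet⟩ := exists_good_e hmn A B Hset hH0 hHne hHcard hA hBt
  choose v hv0 hvpow using fun i => hHmem _ (he i)
  set T : (Fin m → F) →ₗ[F] (Fin n → F) :=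
    { toFun := fun c => fun i => v i * ∑ a, c a * A a i
      map_add' := by
        intro c c'
        funext i
        simp only [Pi.add_apply]
        have h : ∑ a, (c a + c' a) * A a i = (∑ a, c a * A a i) + ∑ a, c' a * A a i := by
          rw [← Finset.sum_add_distrib]
          exact Finset.sum_congr rfl fun a _ => by ring
        rw [h, mul_add]
      map_smul' := by
        intro r c
        funext i
        simp only [Pi.smul_apply, smul_eq_mul, RingHom.id_apply]
        have h : ∑ a, (r * c a) * A a i = r * ∑ a, c a * A a i := by
          rw [Finset.mul_sum]
          exact Finset.sum_congr rfl fun a _ => by ring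
        rw [h]
        ring } with hT
  have hTapp : ∀ c i, T c i = v i * ∑ a, c a * A a i := fun c i => rfl
  have key : ∀ (c : Fin m → F) (Z : Finset (Fin n)), m ≤ Z.card →
      (∀ i ∈ Z, T c i = 0) → c = 0 := by
    intro c Z hZ hvanish
    obtain ⟨S, hSZ, hScard⟩ := Finset.exists_subset_card_eq hZ
    set τ : Fin m → Fin n := fun b => S.orderEmbOfFin hScard b with hτ
    have hτinj : Function.Injective τ := (S.orderEmbOfFin hScard).injective
    set Asub : Matrix (Fin m) (Fin m) F := Matrix.of fun a b => A a (τ b) with hAsub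
    have hvm : Matrix.vecMul c Asub = 0 := by
      funext b
      have hτZ : τ b ∈ Z := hSZ (Finset.orderEmbOfFin_mem S hScard b)
      have := hvanish (τ b) hτZ
      rw [hTapp] at this
      rcases mul_eq_zero.mp this with h | h
      · exact absurd h (hv0 _)
      · simpa [Matrix.vecMul, dotProduct, hAsub] using h
    have hinj : Function.Injective (fun c => Matrix.vecMul c Asub) :=
      Matrix.vecMul_injective_iff_isUnit.mpr ((Matrix.isUnit_iff_isUnit_det _).mpr (hA τ hτinj))
    exact hinj (a₁ := c) (a₂ := 0) (by simpa using hvm)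
  have hTinj : Function.Injective T := by
    rw [injective_iff_map_eq_zero]
    intro c hc
    exact key c univ (by simpa using hmn) (fun i _ => by rw [hc]; rfl)
  -- minimum distance lower bound
  have hlower : ∀ x ∈ LinearMap.range T, x ≠ 0 → n - m + 1 ≤ hammingNorm x := by
    intro x hx hxne
    obtain ⟨c, rfl⟩ := hx
    by_contra hcon
    push_neg at hcon
    have hnorm : hammingNorm (T c) ≤ n - m := by
      unfold hammingNorm at hcon ⊢
      omega
    set Z : Finset (Fin n) := {i | T c i = 0} with hZ
    have hZcard : m ≤ Z.card := by
      have hsplit := Finset.card_filter_add_card_filter_not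
        (s := (univ : Finset (Fin n))) (p := fun i => T c i = 0)
      have h2 : hammingNorm (T c) = #(univ.filter fun i => ¬ T c i = 0) := by
        unfold hammingNorm
        congr!
      have h3 : Z = univ.filter (fun i => T c i = 0) := rfl
      rw [h3]
      simp only [Finset.card_univ, Fintype.card_fin] at hsplit
      omega
    exact absurd (key c Z hZcard (fun i hi => by simpa [hZ] using hi)) (fun h => hxne (by rw [h]; simp))
  refine ⟨LinearMap.range T, ?_, ?_, ⟨?_, hlower⟩⟩
  -- LCD
  · rw [IsGaloisLCD, Submodule.eq_bot_iff]
    intro x hx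
    rw [Submodule.mem_inf] at hx
    obtain ⟨hx1, hx2⟩ := hx
    obtain ⟨c, rfl⟩ := hx1
    have hpkne : (p : ℕ) ^ k ≠ 0 := (pow_pos (Nat.Prime.pos (Fact.out : p.Prime)) k).ne'
    set M : Matrix (Fin m) (Fin m) F :=
      Matrix.of fun a b => ∑ i, e i * A a i * B b i with hM
    have hc0 : ∀ a : Fin m, M.mulVec (fun b => c b ^ p ^ k) a = 0 := by
      intro a
      have hy : T (Pi.single a 1) ∈ LinearMap.range T := ⟨_, rfl⟩
      have hdual := hx2 (T (Pi.single a 1)) hy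
      have hsingle : ∀ i, T (Pi.single a 1) i = v i * A a i := by
        intro i
        rw [hTapp]
        congr 1
        rw [Finset.sum_eq_single a]
        · simp
        · intro b _ hb; simp [Pi.single_eq_of_ne hb]
        · simp
      calc M.mulVec (fun b => c b ^ p ^ k) a
          = ∑ b, ∑ i, e i * A a i * B b i * c b ^ p ^ k := by
            simp only [Matrix.mulVec, dotProduct, hM, Matrix.of_apply]
            exact Finset.sum_congr rfl fun b _ => Finset.sum_mul _ _ _
        _ = ∑ i, ∑ b, e i * A a i * B b i * c b ^ p ^ k := Finset.sum_comm
        _ = ∑ i, T (Pi.single a 1) i * T c i ^ p ^ k := by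
            refine Finset.sum_congr rfl fun i _ => ?_
            rw [hsingle i, hTapp]
            have hexp : (v i * ∑ b, c b * A b i) ^ p ^ k
                = v i ^ p ^ k * ∑ b, c b ^ p ^ k * (A b i) ^ p ^ k := by
              rw [mul_pow, sum_pow_char_pow]
              congr 1
              exact Finset.sum_congr rfl fun b _ => by rw [mul_pow]
            rw [hexp, Finset.mul_sum, Finset.mul_sum]
            refine Finset.sum_congr rfl fun b _ => ?_
            rw [← hvpow i, hBdef]
            simp only [Matrix.of_apply]
            rw [pow_add, pow_one]
            ring
        _ = 0 := hdual
    have hMunit : IsUnit M := (Matrix.isUnit_iff_isUnit_det _).mpr hdet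
    have hcpow : (fun b => c b ^ p ^ k) = (0 : Fin m → F) := by
      have hinj := Matrix.mulVec_injective_iff_isUnit.mpr hMunit
      refine hinj (a₁ := fun b => c b ^ p ^ k) (a₂ := 0) ?_
      funext a
      rw [hc0 a]
      simp
    have hczero : c = 0 := by
      funext b
      have hb := congrFun hcpow b
      simp only [Pi.zero_apply] at hb ⊢
      exact (pow_eq_zero_iff hpkne).mp hb
    rw [hczero]
    simp
  -- finrank
  · rw [← (LinearEquiv.ofInjective T hTinj).finrank_eq]
    exact Module.finrank_fin_fun F
  -- min dist attained
  · obtain ⟨Z, hZu, hZcard⟩ := Finset.exists_subset_card_eq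
      (show m - 1 ≤ (univ : Finset (Fin n)).card by simp; omega)
    set R : (Fin m → F) →ₗ[F] (↥Z → F) :=
      { toFun := fun c => fun i => ∑ a, c a * A a i.val
        map_add' := by
          intro c c'
          funext i
          simp only [Pi.add_apply]
          rw [← Finset.sum_add_distrib]
          exact Finset.sum_congr rfl fun a _ => by ring
        map_smul' := by
          intro r c
          funext i
          simp only [Pi.smul_apply, smul_eq_mul, RingHom.id_apply]
          rw [Finset.mul_sum]
          exact Finset.sum_congr rfl fun a _ => by ring } with hR
    have hker : LinearMap.ker R ≠ ⊥ := by
      refine LinearMap.ker_ne_bot_of_finrank_lt ?_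
      rw [Module.finrank_fin_fun, Module.finrank_pi]
      simp only [Fintype.card_coe]
      omega
    obtain ⟨c, hcker, hcne⟩ := Submodule.exists_mem_ne_zero_of_ne_bot hker
    have hxne : T c ≠ 0 := fun h => hcne (hTinj (by rw [h]; simp))
    refine ⟨T c, ⟨c, rfl⟩, hxne, ?_⟩
    have hub : hammingNorm (T c) ≤ n - m + 1 := by
      have hsubset : ({i | T c i ≠ 0} : Finset (Fin n)) ⊆ univ \ Z := by
        intro i hi
        simp only [Finset.mem_filter, Finset.mem_univ, true_and] at hi
        rw [Finset.mem_sdiff]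
        refine ⟨Finset.mem_univ _, fun hiZ => hi ?_⟩
        have hv := congrFun (LinearMap.mem_ker.mp hcker) ⟨i, hiZ⟩
        simp only [hR, Pi.zero_apply] at hv
        rw [hTapp]
        rw [show (∑ a, c a * A a i) = 0 from hv, mul_zero]
      calc hammingNorm (T c) ≤ (univ \ Z).card := Finset.card_le_card hsubset
        _ = n - m + 1 := by
            rw [Finset.card_sdiff_of_subset hZu, hZcard]
            simp only [Finset.card_univ, Fintype.card_fin]
            omega
    have hlb := hlower (T c) ⟨c, rfl⟩ hxne
    omega

end GaloisLCDProof

/-- Let `q = p^e`, `0 ≤ k < e`, `s = gcd(p^{e-k}+1, p^e-1)`, `p^e - 1 = s t`.  If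
`gcd(n, q) = 1`, `n ≤ q + 1` and `0 ≤ l < min{t, n}`, then there exists a `k`-Galois
LCD MDS code over `F_q` of length `n`, dimension `n - l`, and minimum distance `l + 1`. -/
theorem exists_galoisLCD_MDS_dim_n_sub_l
    (p e k s t : ℕ) [Fact p.Prime] (hk : k < e)
    (F : Type*) [Field F] [Fintype F] [DecidableEq F] [CharP F p]
    (hF : Fintype.card F = p ^ e)
    (hs : s = Nat.gcd (p ^ (e - k) + 1) (p ^ e - 1)) (hst : p ^ e - 1 = s * t)
    {n l : ℕ} (hn : Nat.Coprime n (p ^ e)) (hn1 : n ≤ p ^ e + 1)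
    (hl : l < min t n) :
    ∃ C : Submodule F (Fin n → F),
      IsGaloisLCD p k C ∧ Module.finrank F C = n - l ∧ IsMinDist C (l + 1) := by
  classical
  have hp2 : 2 ≤ p := (Fact.out : p.Prime).two_le
  have hq2 : 2 ≤ p ^ e := by
    calc 2 = 2 ^ 1 := by norm_num
    _ ≤ p ^ e := Nat.pow_le_pow_left hp2 1 |>.trans (Nat.pow_le_pow_right (by omega) (by omega))
  have hlt : l < t := lt_of_lt_of_le hl (min_le_left _ _)
  have hln : l < n := lt_of_lt_of_le hl (min_le_right _ _)
  have hpkne : p ^ k ≠ 0 := (pow_pos (by omega) k).ne'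
  -- the set of (p^k+1)-th powers
  set d : ℕ := p ^ k + 1 with hd
  set Hset : Finset F := (univ.erase (0 : F)).image (fun x => x ^ d) with hHset
  have hHmem : ∀ h ∈ Hset, ∃ v : F, v ≠ 0 ∧ v ^ d = h := by
    intro h hh
    obtain ⟨x, hx, hxh⟩ := Finset.mem_image.mp hh
    exact ⟨x, Finset.ne_of_mem_erase hx, hxh⟩
  have hHne : Hset.Nonempty := by
    refine ⟨1, Finset.mem_image.mpr ⟨1, Finset.mem_erase.mpr ⟨one_ne_zero, Finset.mem_univ _⟩,
      one_pow _⟩⟩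
  -- cardinality bound
  have hts : t ≤ Hset.card := by
    set s' : ℕ := Nat.gcd d (p ^ e - 1) with hs'
    have hs'pos : 0 < s' := Nat.gcd_pos_of_pos_left _ (by omega)
    have hroot : ∀ y : F, y ≠ 0 → y ^ d = 1 → y ^ s' = 1 := by
      intro y hy h1
      have h2 : y ^ (p ^ e - 1) = 1 := by
        have := FiniteField.pow_card_sub_one_eq_one y hy
        rwa [hF] at this
      exact pow_gcd_eq_one.mpr ⟨h1, h2⟩
    have hcle := card_le_pow_image (F := F) d s' hs'pos hroot
    rw [hF] at hcle
    have hs'dvds : s' ∣ s := by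
      have h1 : s' ∣ d := Nat.gcd_dvd_left _ _
      have h2 : s' ∣ p ^ e - 1 := Nat.gcd_dvd_right _ _
      have h3 : s' ∣ p ^ (e - k) * d := h1.mul_left _
      have h4 : p ^ (e - k) * d = p ^ e + p ^ (e - k) := by
        rw [hd, mul_add, mul_one, ← pow_add]
        congr 2
        omega
      have h5 : s' ∣ (p ^ e + p ^ (e - k)) - (p ^ e - 1) := Nat.dvd_sub (h4 ▸ h3) h2
      have h6 : (p ^ e + p ^ (e - k)) - (p ^ e - 1) = p ^ (e - k) + 1 := by
        have : 1 ≤ p ^ (e - k) := Nat.one_le_pow _ _ (by omega)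
        omega
      rw [h6] at h5
      rw [hs]
      exact Nat.dvd_gcd h5 h2
    have hspos : 0 < s := by
      rw [hs]
      exact Nat.gcd_pos_of_pos_left _ (Nat.succ_le_succ (Nat.zero_le _))
    have hs'les : s' ≤ s := Nat.le_of_dvd hspos hs'dvds
    have : s * t ≤ s * Hset.card := by
      calc s * t = p ^ e - 1 := hst.symm
        _ ≤ s' * Hset.card := hcle
        _ ≤ s * Hset.card := Nat.mul_le_mul_right _ hs'les
    exact Nat.le_of_mul_le_mul_left this hspos
  have hfrobinj : Function.Injective (fun x : F => x ^ p ^ k) := by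
    have : (fun x : F => x ^ p ^ k) = iterateFrobenius F p k := by
      funext x
      rw [iterateFrobenius_def]
    rw [this]
    exact (iterateFrobenius F p k).injective
  rcases Nat.lt_or_ge n (p ^ e + 1) with hcase | hcase
  · -- n ≤ p ^ e : plain generalized Reed-Solomon
    have hnq : n ≤ Fintype.card F := by rw [hF]; omega
    obtain ⟨α⟩ : Nonempty (Fin n ↪ F) := by
      have := Fintype.card_fin n ▸ hnq
      exact ⟨(Fintype.equivFinOfCardEq (Fintype.card_fin n)).symm.toEmbedding.trans
        (Function.Embedding.trans (Fin.castLEEmb hnq)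
          (Fintype.equivFinOfCardEq rfl).symm.toEmbedding)⟩
    set m : ℕ := n - l with hm
    have hm1 : 1 ≤ m := by omega
    have hmn : m ≤ n := by omega
    set A : Matrix (Fin m) (Fin n) F := Matrix.of fun a i => (α i) ^ (a : ℕ) with hA
    have hAminor : ∀ τ : Fin m → Fin n, Function.Injective τ →
        IsUnit (Matrix.det (Matrix.of fun a b => A a (τ b))) := by
      intro τ hτ
      exact vdm_unit (fun b => α (τ b)) (fun b1 b2 h => hτ (α.injective h))
    have hBminor : ∀ τ : Fin m → Fin n, Function.Injective τ →
        IsUnit (Matrix.det (Matrix.of fun a b => (A a (τ b)) ^ p ^ k)) := by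
      intro τ hτ
      have hmat : (Matrix.of fun a b => (A a (τ b)) ^ p ^ k)
          = Matrix.of fun a b : Fin m => (fun b => (α (τ b)) ^ p ^ k) b ^ (a : ℕ) := by
        ext a b
        simp only [Matrix.of_apply, hA]
        rw [pow_right_comm]
      rw [hmat]
      exact vdm_unit _ (fun b1 b2 h => hτ (α.injective (hfrobinj h)))
    have hHcard : m < n → 2 ≤ Hset.card := by
      intro hmln
      have : 1 ≤ l := by omega
      omega
    obtain ⟨C, hC1, hC2, hC3⟩ := main_construction p k hm1 hmn A hAminor hBminor Hset
      hHmem hHne hHcard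
    refine ⟨C, hC1, by rw [hC2], ?_⟩
    have : n - m + 1 = l + 1 := by omega
    rwa [this] at hC3
  · -- n = p ^ e + 1 : extended Reed-Solomon
    have hne : n = p ^ e + 1 := by omega
    subst hne
    set q' : ℕ := p ^ e with hq'
    obtain ⟨m', hm'⟩ : ∃ m', q' + 1 - l = m' + 1 := ⟨q' + 1 - l - 1, by omega⟩
    set α : Fin q' → F := ⇑(Fintype.equivFinOfCardEq hF).symm with hα
    have hαinj : Function.Injective α := (Fintype.equivFinOfCardEq hF).symm.injective
    set A : Matrix (Fin (m' + 1)) (Fin (q' + 1)) F := Matrix.of fun a i =>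
      if h : (i : ℕ) < q' then α ⟨i, h⟩ ^ (a : ℕ) else if (a : ℕ) = m' then 1 else 0 with hA
    have hAminor : ∀ τ : Fin (m' + 1) → Fin (q' + 1), Function.Injective τ →
        IsUnit (Matrix.det (Matrix.of fun a b => A a (τ b))) := by
      intro τ hτ
      exact vdm_ext_unit α hαinj τ hτ
    have hBminor : ∀ τ : Fin (m' + 1) → Fin (q' + 1), Function.Injective τ →
        IsUnit (Matrix.det (Matrix.of fun a b => (A a (τ b)) ^ p ^ k)) := by
      intro τ hτ
      have hmat : (Matrix.of fun a b => (A a (τ b)) ^ p ^ k)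
          = Matrix.of fun a b : Fin (m' + 1) =>
            if h : (τ b : ℕ) < q' then (fun j => α j ^ p ^ k) ⟨τ b, h⟩ ^ (a : ℕ)
            else if (a : ℕ) = m' then 1 else 0 := by
        ext a b
        simp only [Matrix.of_apply, hA]
        split_ifs with h1 h2
        · rw [pow_right_comm]
        · exact one_pow _
        · exact zero_pow hpkne
      rw [hmat]
      exact vdm_ext_unit _ (fun j1 j2 h => hαinj (hfrobinj h)) τ hτ
    have hHcard : m' + 1 < q' + 1 → 2 ≤ Hset.card := by
      intro hmln
      have : 1 ≤ l := by omega
      omega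
    obtain ⟨C, hC1, hC2, hC3⟩ := main_construction p k (Nat.succ_le_succ (Nat.zero_le m'))
      (by omega) A hAminor hBminor Hset hHmem hHne hHcard
    refine ⟨C, hC1, by rw [hC2]; omega, ?_⟩
    have : q' + 1 - (m' + 1) + 1 = l + 1 := by omega
    rwa [this] at hC3
end

section
/- Let q = p^e be odd, 0 ≤ k < e, and let l be a positive integer such that l divides p^e - 1, l does not divide p^k + 1, 2(p^k + 1) divides p^e - 1, and l ≤ (p^e - 1)/2. Then there exists a k-Galois LCD MDS code over F_q of length 2l, dimension l, and minimum Hamming distance l + 1. -/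
open Finset

set_option linter.unusedSectionVars false
set_option maxHeartbeats 1000000

private lemma sum_pow_char_pow' {F : Type*} [CommRing F] (p k : ℕ) [Fact p.Prime] [CharP F p]
    {ι : Type*} (S : Finset ι) (f : ι → F) :
    (∑ i ∈ S, f i) ^ p ^ k = ∑ i ∈ S, f i ^ p ^ k := by
  have h := map_sum (iterateFrobenius F p k) f S
  simpa only [iterateFrobenius_def] using h

section Construction

variable {F : Type*} [Field F] [Fintype F] [DecidableEq F]

private lemma coeff_sum_fin {l : ℕ} (u : Fin l → F) (j : Fin l) :
    (∑ t : Fin l, Polynomial.C (u t) * Polynomial.X ^ (t : ℕ)).coeff (j : ℕ) = u j := by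
  rw [Polynomial.finset_sum_coeff]
  simp only [Polynomial.coeff_C_mul, Polynomial.coeff_X_pow]
  rw [Finset.sum_eq_single j]
  · simp
  · intro b _ hb
    rw [if_neg (fun h : (↑j : ℕ) = ↑b => hb (Fin.ext h.symm)), mul_zero]
  · simp

private lemma eval_sum_fin {l : ℕ} (u : Fin l → F) (x : F) :
    Polynomial.eval x (∑ t : Fin l, Polynomial.C (u t) * Polynomial.X ^ (t : ℕ)) =
      ∑ t : Fin l, u t * x ^ (t : ℕ) := by
  rw [Polynomial.eval_finset_sum]
  simp

private lemma natDegree_sum_fin_lt {l : ℕ} (hl0 : 0 < l) (u : Fin l → F) :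
    (∑ t : Fin l, Polynomial.C (u t) * Polynomial.X ^ (t : ℕ)).natDegree < l := by
  have h : (∑ t : Fin l, Polynomial.C (u t) * Polynomial.X ^ (t : ℕ)).natDegree ≤ l - 1 :=
    Polynomial.natDegree_sum_le_of_forall_le Finset.univ _
      (fun t _ => (Polynomial.natDegree_C_mul_X_pow_le (u t) (t : ℕ)).trans
        (by omega : (t : ℕ) ≤ l - 1))
  omega

private theorem galois_construction (p e k : ℕ) [Fact p.Prime] [CharP F p]
    (he : 0 < e) (hF : Fintype.card F = p ^ e)
    {l : ℕ} (hl0 : 0 < l) (hl1 : l ∣ p ^ e - 1)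
    (ζ γ v : F) (hζ : orderOf ζ = l) (hγ : γ ^ l ≠ 1) (hγ0 : γ ≠ 0) (hv : v ≠ 0)
    (hkey : ∀ c : ℕ, 1 + v ^ (p ^ k + 1) * (γ ^ l) ^ c ≠ 0) :
    ∃ C : Submodule F (Fin (2 * l) → F),
      IsGaloisLCD p k C ∧ Module.finrank F C = l ∧ IsMinDist C (l + 1) := by
  classical
  have hp : p.Prime := Fact.out
  have he1 : 1 < p ^ e := Nat.one_lt_pow he.ne' hp.one_lt
  have hpl : ¬ p ∣ l := by
    intro hdl
    have h1 : p ∣ p ^ e - 1 := hdl.trans hl1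
    have h2 : p ∣ p ^ e := dvd_pow_self p he.ne'
    have h3 := Nat.dvd_sub h2 h1
    rw [Nat.sub_sub_self he1.le] at h3
    exact hp.one_lt.ne' (Nat.dvd_one.mp h3)
  have hlF : (l : F) ≠ 0 := by
    rw [Ne, CharP.cast_eq_zero_iff F p l]
    exact hpl
  set s : ℕ := p ^ k with hs
  have hs0 : s ≠ 0 := pow_ne_zero k hp.pos.ne'
  have hco : Nat.Coprime l s := Nat.Coprime.pow_right k ((hp.coprime_iff_not_dvd).mpr hpl).symm
  have hζl : ζ ^ l = 1 := by rw [← hζ]; exact pow_orderOf_eq_one ζ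
  have hζ0 : ζ ≠ 0 := by
    intro h; rw [h, zero_pow hl0.ne'] at hζl; exact zero_ne_one hζl
  have hζdvd : ∀ t : ℕ, ζ ^ t = 1 ↔ l ∣ t := fun t => by
    rw [← hζ]; exact ⟨fun h => orderOf_dvd_of_pow_eq_one h, fun h => orderOf_dvd_iff_pow_eq_one.mp h⟩
  -- evaluation points and weights, as functions on ℕ
  set af : ℕ → F := fun n => if n < l then ζ ^ n else γ * ζ ^ (n - l) with haf
  set wf : ℕ → F := fun n => if n < l then 1 else v with hwf
  have hw0 : ∀ n, wf n ≠ 0 := fun n => by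
    rw [hwf]; dsimp only; split
    · exact one_ne_zero
    · exact hv
  have hzinj : ∀ i j : ℕ, i < l → j < l → ζ ^ i = ζ ^ j → i = j := by
    have key : ∀ i j : ℕ, i ≤ j → j < l → ζ ^ i = ζ ^ j → i = j := by
      intro i j hij hj h
      have h1 : ζ ^ i * ζ ^ (j - i) = ζ ^ i * 1 := by
        rw [← pow_add, Nat.add_sub_cancel' hij, mul_one, h]
      have h2 : ζ ^ (j - i) = 1 := mul_left_cancel₀ (pow_ne_zero i hζ0) h1
      have h3 : l ∣ j - i := (hζdvd _).mp h2
      rcases h3 with ⟨c, hc⟩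
      rcases Nat.eq_zero_or_pos c with rfl | hcpos
      · omega
      · have : l * 1 ≤ l * c := Nat.mul_le_mul_left l hcpos
        omega
    intro i j hi hj h
    rcases le_total i j with hij | hij
    · exact key i j hij hj h
    · exact (key j i hij hi h.symm).symm
  have hainj : Function.Injective (fun i : Fin (2 * l) => af (i : ℕ)) := by
    intro i j hij
    dsimp only at hij
    rw [haf] at hij; dsimp only at hij
    have hγl1 : ∀ t : ℕ, (ζ ^ t) ^ l = 1 := fun t => by
      rw [pow_right_comm, hζl, one_pow]
    have hilt := i.isLt
    have hjlt := j.isLt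
    by_cases hi : (i : ℕ) < l <;> by_cases hj : (j : ℕ) < l
    · rw [if_pos hi, if_pos hj] at hij; exact Fin.ext (hzinj _ _ hi hj hij)
    · rw [if_pos hi, if_neg hj] at hij
      exfalso
      have h4 : γ ^ l * (ζ ^ ((j : ℕ) - l)) ^ l = (ζ ^ (i : ℕ)) ^ l := by
        rw [← mul_pow, ← hij]
      rw [hγl1, hγl1, mul_one] at h4
      exact hγ h4
    · rw [if_neg hi, if_pos hj] at hij
      exfalso
      have h4 : γ ^ l * (ζ ^ ((i : ℕ) - l)) ^ l = (ζ ^ (j : ℕ)) ^ l := by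
        rw [← mul_pow, hij]
      rw [hγl1, hγl1, mul_one] at h4
      exact hγ h4
    · rw [if_neg hi, if_neg hj] at hij
      have h2 := mul_left_cancel₀ hγ0 hij
      have h3 := hzinj _ _ (by omega : (i : ℕ) - l < l) (by omega : (j : ℕ) - l < l) h2
      exact Fin.ext (by omega)
  -- the generator matrix and the code
  set G : Matrix (Fin (2 * l)) (Fin l) F :=
    Matrix.of (fun i j => wf (i : ℕ) * af (i : ℕ) ^ (j : ℕ)) with hG
  set φ : (Fin l → F) →ₗ[F] (Fin (2 * l) → F) := G.mulVecLin with hφdef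
  have hφ : ∀ u i, φ u i = wf (i : ℕ) * ∑ j : Fin l, u j * af (i : ℕ) ^ (j : ℕ) := by
    intro u i
    rw [hφdef]
    rw [Matrix.mulVecLin_apply]
    rw [Matrix.mulVec, dotProduct]
    rw [Finset.mul_sum]
    exact Finset.sum_congr rfl fun j _ => by rw [hG]; simp [Matrix.of_apply]; ring
  have hφP : ∀ (u : Fin l → F) i, φ u i =
      wf (i : ℕ) * Polynomial.eval (af (i : ℕ))
        (∑ t : Fin l, Polynomial.C (u t) * Polynomial.X ^ (t : ℕ)) := by
    intro u i
    rw [hφ, eval_sum_fin]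
  have hker : ∀ u, φ u = 0 → u = 0 := by
    intro u hu
    have hP0 : (∑ t : Fin l, Polynomial.C (u t) * Polynomial.X ^ (t : ℕ)) = 0 := by
      apply Polynomial.eq_zero_of_natDegree_lt_card_of_eval_eq_zero _ hainj
      · intro i
        have h1 : φ u i = 0 := by rw [hu]; rfl
        rw [hφP] at h1
        exact (mul_eq_zero.mp h1).resolve_left (hw0 _)
      · rw [Fintype.card_fin]
        exact lt_of_lt_of_le (natDegree_sum_fin_lt hl0 u) (by omega)
    funext j
    have hc := coeff_sum_fin u j
    rw [hP0] at hc
    simpa using hc.symm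
  have hφinj : Function.Injective φ := by
    intro u u' h
    have h0 : φ (u - u') = 0 := by rw [map_sub, h, sub_self]
    exact sub_eq_zero.mp (hker _ h0)
  refine ⟨LinearMap.range φ, ?_, ?_, ?_⟩
  · -- Galois LCD
    rw [IsGaloisLCD, Submodule.eq_bot_iff]
    intro x hx
    obtain ⟨hxC, hxD⟩ := Submodule.mem_inf.mp hx
    obtain ⟨u, rfl⟩ := hxC
    have hxD' : ∀ c ∈ LinearMap.range φ, ∑ i, c i * (φ u) i ^ p ^ k = 0 := hxD
    suffices hu : u = 0 by rw [hu, map_zero]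
    -- the geometric-sum computation
    have hT : ∀ t : ℕ, ∑ i : Fin (2 * l), wf (i : ℕ) ^ (s + 1) * af (i : ℕ) ^ t
        = if l ∣ t then (1 + v ^ (s + 1) * γ ^ t) * l else 0 := by
      intro t
      rw [Fin.sum_univ_eq_sum_range (fun n => wf n ^ (s + 1) * af n ^ t) (2 * l)]
      rw [two_mul, ← Finset.sum_range_add_sum_Ico _ (Nat.le_add_right l l)]
      have e1 : ∑ n ∈ Finset.range l, wf n ^ (s + 1) * af n ^ t
          = ∑ n ∈ Finset.range l, (ζ ^ t) ^ n := by
        apply Finset.sum_congr rfl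
        intro n hn
        rw [Finset.mem_range] at hn
        rw [hwf, haf]; dsimp only
        rw [if_pos hn, if_pos hn, one_pow, one_mul, pow_right_comm]
      have e2 : ∑ n ∈ Finset.Ico l (l + l), wf n ^ (s + 1) * af n ^ t
          = v ^ (s + 1) * γ ^ t * ∑ n ∈ Finset.range l, (ζ ^ t) ^ n := by
        rw [Finset.sum_Ico_eq_sum_range, Nat.add_sub_cancel, Finset.mul_sum]
        apply Finset.sum_congr rfl
        intro n hn
        rw [Finset.mem_range] at hn
        rw [hwf, haf]; dsimp only
        rw [if_neg (by omega : ¬ l + n < l), if_neg (by omega : ¬ l + n < l)]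
        rw [show l + n - l = n by omega, mul_pow, pow_right_comm ζ n t]
        ring
      rw [e1, e2]
      by_cases hdl : l ∣ t
      · have hζt : ζ ^ t = 1 := (hζdvd t).mpr hdl
        rw [if_pos hdl, hζt]
        simp only [one_pow, Finset.sum_const, Finset.card_range, nsmul_eq_mul, mul_one]
        ring
      · have hζt : ζ ^ t ≠ 1 := fun h => hdl ((hζdvd t).mp h)
        rw [if_neg hdl, geom_sum_eq hζt]
        have hz : (ζ ^ t) ^ l - 1 = 0 := by rw [pow_right_comm, hζl, one_pow, sub_self]
        rw [hz, zero_div, mul_zero, add_zero]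
    -- the generators of the code
    have hgen : ∀ m : Fin l,
        (fun i : Fin (2 * l) => wf (i : ℕ) * af (i : ℕ) ^ (m : ℕ)) ∈ LinearMap.range φ := by
      intro m
      refine ⟨Pi.single m 1, ?_⟩
      funext i
      rw [hφ]
      congr 1
      rw [Finset.sum_eq_single m]
      · simp
      · intro b _ hb
        rw [Pi.single_eq_of_ne hb, zero_mul]
      · intro h; exact absurd (Finset.mem_univ m) h
    -- the dual equations
    have hEq : ∀ m : Fin l, ∑ j : Fin l, u j ^ s *
        (if l ∣ ((m : ℕ) + (j : ℕ) * s)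
          then (1 + v ^ (s + 1) * γ ^ ((m : ℕ) + (j : ℕ) * s)) * l else 0) = 0 := by
      intro m
      have hd := hxD' _ (hgen m)
      have h1 : ∀ i : Fin (2 * l), (wf (i : ℕ) * af (i : ℕ) ^ (m : ℕ)) * (φ u) i ^ p ^ k
          = ∑ j : Fin l, u j ^ s * (wf (i : ℕ) ^ (s + 1) * af (i : ℕ) ^ ((m : ℕ) + (j : ℕ) * s)) := by
        intro i
        rw [hφ, mul_pow, sum_pow_char_pow' p k, Finset.mul_sum, Finset.mul_sum]
        apply Finset.sum_congr rfl
        intro j _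
        rw [mul_pow (u j), ← pow_mul, pow_add, pow_succ, ← hs]
        ring
      have h2 : ∑ i : Fin (2 * l), (wf (i : ℕ) * af (i : ℕ) ^ (m : ℕ)) * (φ u) i ^ p ^ k
          = ∑ j : Fin l, u j ^ s *
            (∑ i : Fin (2 * l), wf (i : ℕ) ^ (s + 1) * af (i : ℕ) ^ ((m : ℕ) + (j : ℕ) * s)) := by
        rw [Finset.sum_congr rfl fun i _ => h1 i, Finset.sum_comm]
        exact Finset.sum_congr rfl fun j _ => by rw [Finset.mul_sum]
      have h3 : ∑ j : Fin l, u j ^ s *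
          (if l ∣ ((m : ℕ) + (j : ℕ) * s)
            then (1 + v ^ (s + 1) * γ ^ ((m : ℕ) + (j : ℕ) * s)) * l else 0)
          = ∑ j : Fin l, u j ^ s *
            (∑ i : Fin (2 * l), wf (i : ℕ) ^ (s + 1) * af (i : ℕ) ^ ((m : ℕ) + (j : ℕ) * s)) :=
        Finset.sum_congr rfl fun j _ => by rw [hT]
      rw [h3, ← h2]
      exact hd
    funext j₀
    show u j₀ = 0
    set m₀ : ℕ := (l - ((j₀ : ℕ) * s) % l) % l with hm₀def
    have hm₀ : m₀ < l := Nat.mod_lt _ hl0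
    have hr : ((j₀ : ℕ) * s) % l < l := Nat.mod_lt _ hl0
    have hdvd : l ∣ m₀ + (j₀ : ℕ) * s := by
      rcases Nat.eq_zero_or_pos (((j₀ : ℕ) * s) % l) with h0 | h0
      · have hm0 : m₀ = 0 := by rw [hm₀def, h0, Nat.sub_zero, Nat.mod_self]
        rw [hm0, zero_add]
        exact Nat.dvd_of_mod_eq_zero h0
      · have hlr : l - ((j₀ : ℕ) * s) % l < l := by omega
        have hm : m₀ = l - ((j₀ : ℕ) * s) % l := by rw [hm₀def, Nat.mod_eq_of_lt hlr]
        apply Nat.dvd_of_mod_eq_zero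
        rw [Nat.add_mod, Nat.mod_eq_of_lt hm₀, hm, Nat.sub_add_cancel (le_of_lt hr),
          Nat.mod_self]
    have hEq₀ := hEq ⟨m₀, hm₀⟩
    have hzero : ∀ j ∈ Finset.univ, j ≠ j₀ → u j ^ s *
        (if l ∣ (((⟨m₀, hm₀⟩ : Fin l) : ℕ) + (j : ℕ) * s)
          then (1 + v ^ (s + 1) * γ ^ (((⟨m₀, hm₀⟩ : Fin l) : ℕ) + (j : ℕ) * s)) * l else 0)
        = 0 := by
      intro j _ hj
      rw [if_neg, mul_zero]
      intro hdj
      apply hj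
      have e1 : (m₀ + (j : ℕ) * s) ≡ (m₀ + (j₀ : ℕ) * s) [MOD l] :=
        ((Nat.modEq_zero_iff_dvd).mpr hdj).trans ((Nat.modEq_zero_iff_dvd).mpr hdvd).symm
      have e2 : ((j : ℕ) * s) ≡ ((j₀ : ℕ) * s) [MOD l] := Nat.ModEq.add_left_cancel' m₀ e1
      have e3 : (j : ℕ) ≡ (j₀ : ℕ) [MOD l] := Nat.ModEq.cancel_right_of_coprime hco e2
      have e4 := e3
      unfold Nat.ModEq at e4
      rw [Nat.mod_eq_of_lt j.isLt, Nat.mod_eq_of_lt j₀.isLt] at e4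
      exact Fin.ext e4
    rw [Finset.sum_eq_single j₀ hzero (fun h => absurd (Finset.mem_univ j₀) h)] at hEq₀
    rw [if_pos hdvd] at hEq₀
    obtain ⟨c, hc⟩ := id hdvd
    rw [show γ ^ (((⟨m₀, hm₀⟩ : Fin l) : ℕ) + (j₀ : ℕ) * s) = (γ ^ l) ^ c by
      show γ ^ (m₀ + (j₀ : ℕ) * s) = _; rw [hc, pow_mul]] at hEq₀
    have hne : (1 + v ^ (s + 1) * (γ ^ l) ^ c) * (l : F) ≠ 0 :=
      mul_ne_zero (hkey c) hlF
    have h5 := (mul_eq_zero.mp hEq₀).resolve_right hne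
    exact (pow_eq_zero_iff hs0).mp h5
  · -- rank
    rw [LinearMap.finrank_range_of_inj hφinj]
    simp [Module.finrank_pi]
  · -- minimum distance
    constructor
    · -- a word of weight exactly l + 1
      set P₀ : Polynomial F :=
        ∏ t ∈ Finset.range (l - 1), (Polynomial.X - Polynomial.C (ζ ^ t)) with hP₀
      have hP₀deg : P₀.natDegree = l - 1 := by
        rw [hP₀, Polynomial.natDegree_prod _ _ (fun t _ => Polynomial.X_sub_C_ne_zero (ζ ^ t))]
        rw [Finset.sum_congr rfl (fun t _ => Polynomial.natDegree_X_sub_C (ζ ^ t))]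
        simp
      set u₀ : Fin l → F := fun j => P₀.coeff (j : ℕ) with hu₀
      have hx₀ : ∀ i : Fin (2 * l), φ u₀ i = wf (i : ℕ) * Polynomial.eval (af (i : ℕ)) P₀ := by
        intro i
        rw [hφ]
        congr 1
        rw [Polynomial.eval_eq_sum_range' (show P₀.natDegree < l by omega) (af (i : ℕ))]
        rw [← Fin.sum_univ_eq_sum_range (fun t => P₀.coeff t * af (i : ℕ) ^ t) l]
      have heval : ∀ i : Fin (2 * l), (Polynomial.eval (af (i : ℕ)) P₀ = 0 ↔ (i : ℕ) < l - 1) := by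
        intro i
        rw [hP₀, Polynomial.eval_prod]
        rw [Finset.prod_eq_zero_iff]
        constructor
        · rintro ⟨t, ht, h0⟩
          rw [Finset.mem_range] at ht
          rw [Polynomial.eval_sub, Polynomial.eval_X, Polynomial.eval_C, sub_eq_zero] at h0
          have htfin : af ((⟨t, by omega⟩ : Fin (2 * l)) : ℕ) = ζ ^ t := by
            rw [haf]; dsimp only; rw [if_pos (show t < l by omega)]
          have hia : i = ⟨t, by omega⟩ := hainj (by dsimp only; rw [htfin, h0])
          rw [hia]
          exact ht
        · intro hi
          refine ⟨(i : ℕ), Finset.mem_range.mpr hi, ?_⟩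
          rw [Polynomial.eval_sub, Polynomial.eval_X, Polynomial.eval_C, sub_eq_zero]
          rw [haf]; dsimp only; rw [if_pos (show (i : ℕ) < l by omega)]
      have hcount : (Finset.univ.filter (fun i : Fin (2 * l) => (i : ℕ) < l - 1)).card = l - 1 := by
        have hb : l - 1 < 2 * l := by omega
        have hset : (Finset.univ.filter (fun i : Fin (2 * l) => (i : ℕ) < l - 1))
            = Finset.Iio (⟨l - 1, hb⟩ : Fin (2 * l)) := by
          ext i
          simp [Finset.mem_Iio, Fin.lt_def]
        rw [hset, Fin.card_Iio]
      have hnorm : hammingNorm (φ u₀) = l + 1 := by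
        have hne : ∀ i : Fin (2 * l), φ u₀ i ≠ 0 ↔ ¬ ((i : ℕ) < l - 1) := by
          intro i
          rw [hx₀ i]
          constructor
          · intro h hlt
            exact h (by rw [(heval i).mpr hlt, mul_zero])
          · intro h hzero
            exact h ((heval i).mp ((mul_eq_zero.mp hzero).resolve_left (hw0 _)))
        have h4 : hammingNorm (φ u₀) =
            (Finset.univ.filter (fun i : Fin (2 * l) => ¬ ((i : ℕ) < l - 1))).card := by
          show (Finset.univ.filter (fun i => φ u₀ i ≠ 0)).card = _
          rw [Finset.filter_congr (fun i _ => by rw [hne i])]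
        have h5 := Finset.card_filter_add_card_filter_not
          (s := (Finset.univ : Finset (Fin (2 * l))))
          (p := fun i : Fin (2 * l) => (i : ℕ) < l - 1)
        rw [Finset.card_univ, Fintype.card_fin] at h5
        rw [h4]
        omega
      refine ⟨φ u₀, ⟨u₀, rfl⟩, ?_, hnorm⟩
      intro h
      rw [h, hammingNorm_zero] at hnorm
      omega
    · -- lower bound on weights
      rintro x ⟨u, rfl⟩ hx0
      have hu0 : u ≠ 0 := fun h => hx0 (by rw [h, map_zero])
      have hPne : (∑ t : Fin l, Polynomial.C (u t) * Polynomial.X ^ (t : ℕ)) ≠ 0 := by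
        intro h
        apply hu0
        funext j
        have hc := coeff_sum_fin u j
        rw [h] at hc
        simpa using hc.symm
      have hZ : (Finset.univ.filter (fun i : Fin (2 * l) => φ u i = 0)).card ≤ l - 1 := by
        calc (Finset.univ.filter (fun i : Fin (2 * l) => φ u i = 0)).card
            ≤ (∑ t : Fin l, Polynomial.C (u t) * Polynomial.X ^ (t : ℕ)).roots.toFinset.card := by
              apply Finset.card_le_card_of_injOn (fun i : Fin (2 * l) => af (i : ℕ))
              · intro i hi
                rw [Finset.mem_coe, Finset.mem_filter] at hi
                rw [Finset.mem_coe, Multiset.mem_toFinset, Polynomial.mem_roots hPne]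
                have h1 := hi.2
                rw [hφP] at h1
                exact (mul_eq_zero.mp h1).resolve_left (hw0 _)
              · intro i _ j _ h
                exact hainj h
          _ ≤ Multiset.card (∑ t : Fin l, Polynomial.C (u t) * Polynomial.X ^ (t : ℕ)).roots :=
              Multiset.toFinset_card_le _
          _ ≤ (∑ t : Fin l, Polynomial.C (u t) * Polynomial.X ^ (t : ℕ)).natDegree :=
              Polynomial.card_roots' _
          _ ≤ l - 1 := by have := natDegree_sum_fin_lt hl0 u; omega
      have h3 := Finset.card_filter_add_card_filter_not
        (s := (Finset.univ : Finset (Fin (2 * l))))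
        (p := fun i : Fin (2 * l) => φ u i = 0)
      rw [Finset.card_univ, Fintype.card_fin] at h3
      have h4 : hammingNorm (φ u) =
          (Finset.univ.filter (fun i : Fin (2 * l) => ¬ (φ u i = 0))).card := rfl
      rw [h4]
      omega

end Construction

/-- Let `q = p^e` be odd, `0 ≤ k < e`, and let `l > 0` with `l ∣ p^e - 1`,
`l ∤ p^k + 1`, `2(p^k+1) ∣ p^e - 1` and `l ≤ (p^e-1)/2`.  Then there exists a
`k`-Galois LCD MDS code over `F_q` with parameters `[2l, l, l+1]_q`. -/
theorem exists_galoisLCD_MDS_two_l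
    (p e k : ℕ) [Fact p.Prime] (hk : k < e) (hodd : Odd (p ^ e))
    (F : Type*) [Field F] [Fintype F] [DecidableEq F] [CharP F p]
    (hF : Fintype.card F = p ^ e)
    {l : ℕ} (hl0 : 0 < l) (hl1 : l ∣ p ^ e - 1) (hl2 : ¬ l ∣ p ^ k + 1)
    (hl3 : 2 * (p ^ k + 1) ∣ p ^ e - 1) (hl4 : l ≤ (p ^ e - 1) / 2) :
    ∃ C : Submodule F (Fin (2 * l) → F),
      IsGaloisLCD p k C ∧ Module.finrank F C = l ∧ IsMinDist C (l + 1) := by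
  classical
  have hp : p.Prime := Fact.out
  have he : 0 < e := by omega
  have hp2 : 2 < p := by
    by_contra h
    have hpe : p = 2 := by have := hp.two_le; omega
    have hpe2 : Even (p ^ e) := (Nat.even_pow).mpr ⟨by rw [hpe]; exact even_two, he.ne'⟩
    exact (Nat.not_odd_iff_even.mpr hpe2) hodd
  haveI : Fact (2 < p) := ⟨hp2⟩
  set N := p ^ e - 1 with hN
  have he1 : 1 < p ^ e := Nat.one_lt_pow he.ne' hp.one_lt
  have hN2 : 2 ≤ N := by
    have h3 : 3 ≤ p ^ e := le_trans (by omega : 3 ≤ p) (Nat.le_self_pow he.ne' p)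
    omega
  obtain ⟨g, hg⟩ := IsCyclic.exists_generator (α := Fˣ)
  have hgord : orderOf g = N := by
    rw [orderOf_eq_card_of_forall_mem_zpowers hg, Nat.card_units F, Nat.card_eq_fintype_card, hF]
  have hlN : l ∣ N := hl1
  -- ζ of multiplicative order l
  have hζuord : orderOf (g ^ (N / l)) = l := by
    have h := orderOf_pow_orderOf_div (x := g) (n := l)
      (by rw [hgord]; omega) (by rw [hgord]; exact hlN)
    rw [hgord] at h
    exact h
  have hζord : orderOf ((g : F) ^ (N / l)) = l := by
    rw [← Units.val_pow_eq_pow_val, orderOf_units]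
    exact hζuord
  set M := N / l with hM
  have hNlM : N = l * M := (Nat.mul_div_cancel' hlN).symm
  have hM2 : 2 ≤ M := by
    have h2 : N / 2 * 2 ≤ N := Nat.div_mul_le_self N 2
    have h4 : 2 * l ≤ N := by omega
    have h3 : l * 2 ≤ l * M := by rw [mul_comm l 2, ← hNlM]; exact h4
    exact Nat.le_of_mul_le_mul_left h3 hl0
  set s1 := p ^ k + 1 with hs1
  by_cases hMe : 2 ∣ M
  · -- Case A: γ^l = -1, v = g
    have h2lN : 2 * l ∣ N := by
      obtain ⟨d, hd⟩ := hMe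
      exact ⟨d, by rw [hNlM, hd]; ring⟩
    have hγlord : orderOf ((g ^ (N / (2 * l))) ^ l) = 2 := by
      obtain ⟨d, hd⟩ := id h2lN
      have h1 : N / (2 * l) = d := by rw [hd]; exact Nat.mul_div_cancel_left d (by omega)
      have h2 : (g ^ (N / (2 * l))) ^ l = g ^ (N / 2) := by
        rw [h1, ← pow_mul]
        congr 1
        have h5 : N / 2 = d * l := by
          rw [hd, show 2 * l * d = 2 * (d * l) by ring]
          exact Nat.mul_div_cancel_left _ (by omega)
        exact h5.symm
      rw [h2]
      have h4 : 2 ∣ N := dvd_trans (dvd_mul_right 2 l) h2lN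
      have h3 := orderOf_pow_orderOf_div (x := g) (n := 2)
        (by rw [hgord]; omega) (by rw [hgord]; exact h4)
      rw [hgord] at h3
      exact h3
    have hneg : ((g : F) ^ (N / (2 * l))) ^ l = -1 := by
      set x : F := ((g : F) ^ (N / (2 * l))) ^ l with hx
      have hxu : x = (((g ^ (N / (2 * l))) ^ l : Fˣ) : F) := by
        rw [hx, Units.val_pow_eq_pow_val, Units.val_pow_eq_pow_val]
      have hxo : orderOf x = 2 := by rw [hxu, orderOf_units, hγlord]
      have hx2 : x ^ 2 = 1 := by rw [← hxo]; exact pow_orderOf_eq_one x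
      have hx1 : x ≠ 1 := by intro h; rw [h, orderOf_one] at hxo; omega
      have h3 : (x - 1) * (x + 1) = 0 := by linear_combination hx2
      rcases mul_eq_zero.mp h3 with h | h
      · exact absurd (sub_eq_zero.mp h) hx1
      · exact eq_neg_of_add_eq_zero_left h
    have hs1N : s1 ∣ N := dvd_trans (dvd_mul_left s1 2) hl3
    have hword : orderOf (g ^ s1) = N / s1 := by
      rw [orderOf_pow, hgord, Nat.gcd_eq_right hs1N]
    have hNs1 : 4 ≤ N / s1 := by
      obtain ⟨ww, hww⟩ := hl3
      have hww1 : ww ≠ 0 := by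
        intro h; rw [h, mul_zero] at hww; omega
      have hNs1v : N / s1 = 2 * ww := by
        rw [hww, show 2 * s1 * ww = s1 * (2 * ww) by ring]
        exact Nat.mul_div_cancel_left _ (by rw [hs1]; positivity)
      have hww2 : ww ≠ 1 := by
        intro h1
        rw [h1, mul_one] at hww
        have h2 : 2 * l ∣ 2 * s1 := by rw [← hww]; exact h2lN
        exact hl2 ((mul_dvd_mul_iff_left (two_ne_zero)).mp h2)
      omega
    have hv1 : (g : F) ^ s1 ≠ 1 := by
      intro h
      have h1 : ((g ^ s1 : Fˣ) : F) = 1 := by rw [Units.val_pow_eq_pow_val]; exact h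
      have h2 : (g ^ s1 : Fˣ) = 1 := Units.val_eq_one.mp h1
      rw [h2, orderOf_one] at hword
      omega
    have hvne : (g : F) ^ s1 ≠ -1 := by
      intro h
      have h3 : ((g ^ s1 : Fˣ) : F) ^ 2 = 1 := by
        rw [Units.val_pow_eq_pow_val, h]; ring
      have h4 : (g ^ s1 : Fˣ) ^ 2 = 1 := Units.val_eq_one.mp
        (by rw [Units.val_pow_eq_pow_val]; exact h3)
      have h5 : orderOf (g ^ s1 : Fˣ) ∣ 2 := orderOf_dvd_of_pow_eq_one h4
      rw [hword] at h5
      have := Nat.le_of_dvd (by omega) h5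
      omega
    apply galois_construction p e k he hF hl0 hl1 ((g : F) ^ (N / l))
      ((g : F) ^ (N / (2 * l))) (g : F) hζord
      (by rw [hneg]; exact CharP.neg_one_ne_one F p)
      (pow_ne_zero _ (Units.ne_zero g)) (Units.ne_zero g)
    intro c habs
    rw [hneg] at habs
    rcases Nat.even_or_odd c with hc | hc
    · rw [hc.neg_one_pow, mul_one] at habs
      exact hvne (eq_neg_of_add_eq_zero_right habs)
    · rw [hc.neg_one_pow, mul_neg_one] at habs
      exact hv1 (by linear_combination -habs)
  · -- Case B: M odd, v = 1
    have hγord : orderOf ((g : F) ^ l) = M := by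
      rw [show ((g : F)) ^ l = ((g ^ l : Fˣ) : F) from (Units.val_pow_eq_pow_val g l).symm,
        orderOf_units, orderOf_pow, hgord, Nat.gcd_eq_right hlN]
    have hγ1 : ((g : F) ^ l) ≠ 1 := by
      intro h
      rw [h, orderOf_one] at hγord
      omega
    apply galois_construction p e k he hF hl0 hl1 ((g : F) ^ (N / l))
      (g : F) (1 : F) hζord hγ1 (Units.ne_zero g) one_ne_zero
    intro c habs
    rw [one_pow, one_mul] at habs
    have h1 : (((g : F) ^ l) ^ c) = -1 := eq_neg_of_add_eq_zero_right habs
    have h2 : ((g : F) ^ l) ^ (2 * c) = 1 := by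
      rw [mul_comm, pow_mul, h1]; ring
    have h3 : M ∣ c * 2 := by
      rw [← hγord]
      have := orderOf_dvd_of_pow_eq_one h2
      rwa [mul_comm] at this
    have hco2 : Nat.Coprime M 2 := ((Nat.prime_two.coprime_iff_not_dvd).mpr hMe).symm
    have h4 : M ∣ c := Nat.Coprime.dvd_of_dvd_mul_right hco2 h3
    have h5 : ((g : F) ^ l) ^ c = 1 := by
      obtain ⟨d, hd⟩ := h4
      rw [hd, pow_mul, ← hγord, pow_orderOf_eq_one, one_pow]
    rw [h5] at h1
    exact (CharP.neg_one_ne_one F p) h1.symm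
end

section
/- Let q = p^e, 0 ≤ k < e, let n be coprime to q, and let λ ∈ F_q^*. If C is a λ-constacyclic code of length n over F_q, then its k-Galois dual C^{⊥_k} is a λ^{-p^{e-k}}-constacyclic code of length n over F_q. -/
open Finset

/-- The constacyclic shift map. -/
def shiftFun {F : Type*} [Field F] (lam : F) {n : ℕ} (c : Fin n → F) : Fin n → F :=
  fun i : Fin n => if (i : ℕ) = 0 then lam * c ⟨n - 1, by have := i.isLt; omega⟩
    else c ⟨(i : ℕ) - 1, by have := i.isLt; omega⟩

lemma shiftFun_zero {F : Type*} [Field F] (lam : F) {m : ℕ} (c : Fin (m + 1) → F) :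
    shiftFun lam c 0 = lam * c (Fin.last m) := by
  simp [shiftFun, Fin.last]

lemma shiftFun_succ {F : Type*} [Field F] (lam : F) {m : ℕ} (c : Fin (m + 1) → F) (i : Fin m) :
    shiftFun lam c i.succ = c i.castSucc := by
  have h : ((i.succ : Fin (m + 1)) : ℕ) = (i : ℕ) + 1 := rfl
  simp only [shiftFun, h, Nat.succ_ne_zero, if_false, Nat.add_sub_cancel]
  congr 1

lemma shiftFun_injective {F : Type*} [Field F] {lam : F} (hlam : lam ≠ 0) {n : ℕ} :
    Function.Injective (shiftFun lam : (Fin n → F) → (Fin n → F)) := by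
  intro a b hab
  funext j
  by_cases hj : (j : ℕ) + 1 < n
  · have h := congrFun hab ⟨(j : ℕ) + 1, hj⟩
    simp only [shiftFun, Nat.succ_ne_zero, if_false, Nat.add_sub_cancel] at h
    simpa [Fin.ext_iff] using h
  · have hj' : (j : ℕ) = n - 1 := by have := j.isLt; omega
    have hpos : 0 < n := j.pos
    have h := congrFun hab ⟨0, hpos⟩
    simp only [shiftFun, if_pos rfl] at h
    have h2 := mul_left_cancel₀ hlam h
    have hjeq : j = ⟨n - 1, by omega⟩ := Fin.ext hj'
    rw [hjeq]; exact h2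

lemma exists_shift_preimage {F : Type*} [Field F] [Finite F] {n : ℕ} {lam : F} (hlam : lam ≠ 0)
    {C : Submodule F (Fin n → F)} (hC : IsConstacyclic lam C) {c : Fin n → F} (hc : c ∈ C) :
    ∃ d ∈ C, shiftFun lam d = c := by
  have hC' : ∀ x ∈ C, shiftFun lam x ∈ C := hC
  let f : C → C := fun d => ⟨shiftFun lam d.1, hC' d.1 d.2⟩
  have hinj : Function.Injective f := by
    intro a b h
    exact Subtype.ext (shiftFun_injective hlam (congrArg Subtype.val h))
  have hsurj : Function.Surjective f := Finite.injective_iff_surjective.mp hinj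
  obtain ⟨d, hd⟩ := hsurj ⟨c, hc⟩
  exact ⟨d.1, d.2, congrArg Subtype.val hd⟩

/-- If `C` is a `λ`-constacyclic code of length `n` over `F_q` (`q = p^e`, `0 ≤ k < e`,
`gcd(n,q) = 1`), then its `k`-Galois dual `C^{⊥_k}` is a `λ^{-p^{e-k}}`-constacyclic code. -/
theorem galoisDual_constacyclic
    (p e k : ℕ) [Fact p.Prime] (hk : k < e)
    (F : Type*) [Field F] [Fintype F] [CharP F p]
    (hF : Fintype.card F = p ^ e)
    {n : ℕ} (hn : Nat.Coprime n (p ^ e))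
    (lam : F) (hlam : lam ≠ 0)
    (C : Submodule F (Fin n → F)) (hC : IsConstacyclic lam C) :
    IsConstacyclic (lam⁻¹ ^ p ^ (e - k)) (galoisDual p k C) := by
  intro x hx
  set mu : F := lam⁻¹ ^ p ^ (e - k) with hmu
  have hmupow : mu ^ p ^ k = lam⁻¹ := by
    rw [hmu, ← pow_mul, ← pow_add, Nat.sub_add_cancel hk.le, ← hF, FiniteField.pow_card]
  have key : shiftFun mu x ∈ galoisDual p k C := by
    show ∀ c ∈ C, ∑ i, c i * (shiftFun mu x) i ^ p ^ k = 0
    intro c hc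
    obtain ⟨d, hd, hdc⟩ := exists_shift_preimage hlam hC hc
    rw [← hdc]
    have hxd : ∑ i, d i * x i ^ p ^ k = 0 := hx d hd
    rcases Nat.eq_zero_or_pos n with h0 | hpos
    · subst h0; simp
    · obtain ⟨m, rfl⟩ := Nat.exists_eq_succ_of_ne_zero hpos.ne'
      rw [Fin.sum_univ_succ]
      have h1 : shiftFun lam d 0 * (shiftFun mu x) 0 ^ p ^ k
          = d (Fin.last m) * x (Fin.last m) ^ p ^ k := by
        rw [shiftFun_zero, shiftFun_zero, mul_pow, hmupow]
        field_simp
      have h2 : ∀ i : Fin m, shiftFun lam d i.succ * (shiftFun mu x) i.succ ^ p ^ k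
          = d i.castSucc * x i.castSucc ^ p ^ k := fun i => by
        rw [shiftFun_succ, shiftFun_succ]
      rw [h1, Finset.sum_congr rfl fun i _ => h2 i]
      rw [Fin.sum_univ_castSucc] at hxd
      linear_combination hxd
  exact key
end

section
/- Let q = p^e, 0 ≤ k < e, let n be coprime to q, and let λ ∈ F_q^* be a primitive r-th root of unity. If λ^{1+p^{e-k}} ≠ 1 (equivalently, r divides p^e - 1 but r does not divide 1 + p^{e-k}), then every λ-constacyclic code C of length n over F_q is a k-Galois LCD code, i.e., C ∩ C^{⊥_k} = {0}. -/
open Finset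

noncomputable section AuxLCD

namespace AuxLCD

open Polynomial Module

variable {F : Type*} [Field F] {n : ℕ}

/-- Encode a vector as a polynomial of degree `< n`. -/
def pol (x : Fin n → F) : F[X] := ∑ i : Fin n, Polynomial.C (x i) * X ^ (i : ℕ)

lemma pol_coeff (x : Fin n → F) (i : Fin n) : (pol x).coeff (i : ℕ) = x i := by
  classical
  rw [pol, Polynomial.finset_sum_coeff, Finset.sum_eq_single i]
  · simp
  · intro j _ hj
    rw [Polynomial.coeff_C_mul, Polynomial.coeff_X_pow, if_neg, mul_zero]
    exact fun h => hj (Fin.ext h.symm)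
  · simp

lemma natDegree_pol_lt (hn : 0 < n) (x : Fin n → F) : (pol x).natDegree < n := by
  have h : (pol x).natDegree ≤ n - 1 := by
    refine Polynomial.natDegree_sum_le_of_forall_le _ _ fun i _ => ?_
    refine le_trans (Polynomial.natDegree_C_mul_le _ _) ?_
    rw [Polynomial.natDegree_X_pow]
    have := i.isLt; omega
  omega

/-- The constacyclic shift. -/
def shiftFun (lam : F) (c : Fin n → F) : Fin n → F :=
  fun i : Fin n => if (i : ℕ) = 0 then lam * c ⟨n - 1, by have := i.isLt; omega⟩
    else c ⟨(i : ℕ) - 1, by have := i.isLt; omega⟩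

lemma isConstacyclic_iff {lam : F} {W : Submodule F (Fin n → F)} :
    IsConstacyclic lam W ↔ ∀ c ∈ W, shiftFun lam c ∈ W := Iff.rfl

/-- The constacyclic shift as a linear map. -/
def shiftLin (lam : F) : (Fin n → F) →ₗ[F] (Fin n → F) where
  toFun := shiftFun lam
  map_add' a b := by
    funext i; by_cases h : (i : ℕ) = 0 <;> simp [shiftFun, h, mul_add]
  map_smul' r a := by
    funext i; by_cases h : (i : ℕ) = 0 <;> simp [shiftFun, h, mul_left_comm]

lemma shiftFun_injective {lam : F} (hl : lam ≠ 0) :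
    Function.Injective (shiftFun (n := n) lam) := by
  intro a b h
  funext i
  rcases Nat.lt_or_ge ((i : ℕ) + 1) n with hi | hi
  · have h2 := congrFun h ⟨(i : ℕ) + 1, hi⟩
    simpa [shiftFun] using h2
  · have hn : 0 < n := i.pos
    have h2 := congrFun h ⟨0, hn⟩
    simp only [shiftFun] at h2
    rw [if_pos trivial, if_pos trivial] at h2
    have h3 := mul_left_cancel₀ hl h2
    have h4 : i = ⟨n - 1, by omega⟩ := Fin.ext (by have := i.isLt; simp; omega)
    rw [h4]; exact h3

lemma shift_surjOn {lam : F} (hl : lam ≠ 0) {W : Submodule F (Fin n → F)}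
    (hW : IsConstacyclic lam W) : ∀ c ∈ W, ∃ c' ∈ W, shiftFun lam c' = c := by
  have hinj : Function.Injective (shiftLin (n := n) (F := F) lam) := shiftFun_injective hl
  have hle : W.map (shiftLin lam) ≤ W := by
    rintro _ ⟨c, hc, rfl⟩; exact hW c hc
  have heq : W.map (shiftLin lam) = W := by
    apply Submodule.eq_of_le_of_finrank_le hle
    have h2 : W.map (shiftLin lam)
        = W.map (LinearEquiv.ofInjectiveEndo (shiftLin lam) hinj : _ →ₗ[F] _) := rfl
    rw [h2, LinearEquiv.finrank_map_eq]
  intro c hc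
  rw [← heq] at hc
  rcases hc with ⟨c', hc', h⟩
  exact ⟨c', hc', h⟩

/-- Every constacyclic code is given by a generator polynomial dividing `X^n - λ`. -/
lemma exists_gen (hn : 0 < n) (lam : F) (W : Submodule F (Fin n → F))
    (hW : IsConstacyclic lam W) :
    ∃ g : F[X], g ∣ (X ^ n - Polynomial.C lam) ∧ g.natDegree + finrank F ↥W = n ∧
      ∀ x : Fin n → F, x ∈ W ↔ g ∣ pol x := by
  classical
  set f : F[X] := X ^ n - Polynomial.C lam with hfdef
  have hf : f.Monic := monic_X_pow_sub_C lam hn.ne'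
  have hf0 : f ≠ 0 := hf.ne_zero
  let pb := AdjoinRoot.powerBasis' hf
  have hfd : f.natDegree = n := by rw [hfdef]; exact natDegree_X_pow_sub_C
  have hdim : pb.dim = n := by simpa [pb] using hfd
  let bas : Basis (Fin n) F (AdjoinRoot f) := pb.basis.reindex (finCongr hdim)
  let Ψ : (Fin n → F) ≃ₗ[F] AdjoinRoot f := bas.equivFun.symm
  have hΨ : ∀ x : Fin n → F, Ψ x = ∑ i : Fin n, x i • AdjoinRoot.root f ^ (i : ℕ) := by
    intro x
    rw [show Ψ x = bas.equivFun.symm x from rfl, Basis.equivFun_symm_apply]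
    refine Finset.sum_congr rfl fun i _ => ?_
    rw [show bas i = pb.basis ((finCongr hdim).symm i) from Basis.reindex_apply _ _ i,
      pb.basis_eq_pow]
    simp [pb]
  have hrootn : AdjoinRoot.root f ^ n = algebraMap F (AdjoinRoot f) lam := by
    have h0 : AdjoinRoot.mk f f = 0 := AdjoinRoot.mk_self
    rw [hfdef, map_sub, map_pow, AdjoinRoot.mk_X, sub_eq_zero] at h0
    rw [h0, AdjoinRoot.mk_C]
    rfl
  have hmk : ∀ x : Fin n → F, Ψ x = AdjoinRoot.mk f (pol x) := by
    intro x
    rw [hΨ, pol, map_sum]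
    refine Finset.sum_congr rfl fun i _ => ?_
    rw [map_mul, map_pow, AdjoinRoot.mk_X, AdjoinRoot.mk_C, Algebra.smul_def]
    rfl
  have hshift : ∀ x : Fin n → F, Ψ (shiftFun lam x) = AdjoinRoot.root f * Ψ x := by
    obtain ⟨m, rfl⟩ : ∃ m, n = m + 1 := ⟨n - 1, by omega⟩
    intro x
    rw [hΨ, hΨ, Finset.mul_sum]
    rw [Fin.sum_univ_succ (f := fun i : Fin (m+1) => shiftFun lam x i • AdjoinRoot.root f ^ (i : ℕ))]
    rw [Fin.sum_univ_castSucc (f := fun i : Fin (m+1) =>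
      AdjoinRoot.root f * (x i • AdjoinRoot.root f ^ (i : ℕ)))]
    have h1 : shiftFun lam x 0 = lam * x (Fin.last m) := by
      simp [shiftFun, Fin.last]
    have h2 : ∀ i : Fin m, shiftFun lam x i.succ = x i.castSucc := by
      intro i
      simp only [shiftFun, Fin.val_succ, Nat.succ_ne_zero, if_false, Nat.add_sub_cancel]
      rfl
    have h3 : ∀ i : Fin m,
        AdjoinRoot.root f * (x i.castSucc • AdjoinRoot.root f ^ ((i.castSucc : Fin (m+1)) : ℕ))
        = x i.castSucc • AdjoinRoot.root f ^ ((i : ℕ) + 1) := by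
      intro i
      rw [mul_smul_comm, ← pow_succ']
      simp
    have h4 : AdjoinRoot.root f * (x (Fin.last m) • AdjoinRoot.root f ^ ((Fin.last m : Fin (m+1)) : ℕ))
        = (lam * x (Fin.last m)) • (1 : AdjoinRoot f) := by
      rw [mul_smul_comm, ← pow_succ']
      rw [show ((Fin.last m : Fin (m+1)) : ℕ) + 1 = m + 1 from by simp [Fin.last]]
      rw [hrootn, Algebra.algebraMap_eq_smul_one, smul_smul, mul_comm]
    rw [h1, h4]
    have h5 : ∑ i : Fin m, shiftFun lam x i.succ • AdjoinRoot.root f ^ ((i.succ : Fin (m+1)) : ℕ)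
        = ∑ i : Fin m, x i.castSucc • AdjoinRoot.root f ^ ((i : ℕ) + 1) := by
      refine Finset.sum_congr rfl fun i _ => ?_
      rw [h2]
      simp [Fin.val_succ]
    have h6 : ∑ i : Fin m,
        AdjoinRoot.root f * (x i.castSucc • AdjoinRoot.root f ^ ((i.castSucc : Fin (m+1)) : ℕ))
        = ∑ i : Fin m, x i.castSucc • AdjoinRoot.root f ^ ((i : ℕ) + 1) :=
      Finset.sum_congr rfl fun i _ => h3 i
    rw [h5, h6]
    rw [Fin.val_zero, pow_zero, add_comm]
  set Ch : Submodule F (AdjoinRoot f) := W.map (Ψ : (Fin n → F) →ₗ[F] AdjoinRoot f) with hChdef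
  have hmul : ∀ z y, y ∈ Ch → z * y ∈ Ch := by
    have hroot : ∀ y ∈ Ch, AdjoinRoot.root f * y ∈ Ch := by
      rintro _ ⟨x, hx, rfl⟩
      exact ⟨shiftFun lam x, hW x hx, hshift x⟩
    let T : Subalgebra F (AdjoinRoot f) :=
      { carrier := {z | ∀ y ∈ Ch, z * y ∈ Ch}
        mul_mem' := fun {a b} ha hb y hy => by
          rw [mul_assoc]; exact ha _ (hb _ hy)
        add_mem' := fun {a b} ha hb y hy => by
          rw [add_mul]; exact Ch.add_mem (ha _ hy) (hb _ hy)
        algebraMap_mem' := fun r y hy => by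
          rw [← Algebra.smul_def]; exact Ch.smul_mem r hy }
    have hT : ∀ z, z ∈ T := by
      intro z
      have hle : (⊤ : Subalgebra F (AdjoinRoot f)) ≤ T := by
        rw [← AdjoinRoot.adjoinRoot_eq_top (f := f)]
        exact Algebra.adjoin_le (Set.singleton_subset_iff.2 hroot)
      exact hle trivial
    exact fun z y hy => hT z y hy
  let Ihat : Ideal (AdjoinRoot f) :=
    { carrier := Ch
      zero_mem' := Ch.zero_mem
      add_mem' := fun {a b} ha hb => Ch.add_mem ha hb
      smul_mem' := fun z y hy => by
        simpa [smul_eq_mul] using hmul z y hy }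
  set J : Ideal F[X] := Ideal.comap (AdjoinRoot.mk f) Ihat with hJdef
  have hgspan : Ideal.span {Submodule.IsPrincipal.generator J} = J :=
    Ideal.span_singleton_generator J
  set g : F[X] := Submodule.IsPrincipal.generator J with hgdef
  have memJ : ∀ r : F[X], r ∈ J ↔ g ∣ r := by
    intro r; rw [← hgspan, Ideal.mem_span_singleton]
  have hfJ : f ∈ J := by
    rw [hJdef, Ideal.mem_comap]
    show AdjoinRoot.mk f f ∈ Ch
    rw [AdjoinRoot.mk_self]
    exact Ch.zero_mem
  have hgf : g ∣ f := (memJ f).1 hfJ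
  have hmemW : ∀ x : Fin n → F, x ∈ W ↔ g ∣ pol x := by
    intro x
    rw [← memJ, hJdef, Ideal.mem_comap, ← hmk]
    constructor
    · intro hx
      exact ⟨x, hx, rfl⟩
    · rintro ⟨x', hx', hxx⟩
      rwa [← Ψ.injective hxx]
  -- dimension count
  have hg0 : g ≠ 0 := by
    intro h0; rw [h0] at hgf; exact hf0 (zero_dvd_iff.mp hgf)
  have hρ0 : (Polynomial.aeval (AdjoinRoot.root g)) f = 0 := by
    rw [AdjoinRoot.aeval_eq, AdjoinRoot.mk_eq_zero]; exact hgf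
  let ρ : AdjoinRoot f →ₐ[F] AdjoinRoot g := AdjoinRoot.liftAlgHom f (Algebra.ofId F _) (AdjoinRoot.root g)
    (by rw [Polynomial.aeval_def] at hρ0; exact hρ0)
  have hρmk : ∀ r : F[X], ρ (AdjoinRoot.mk f r) = AdjoinRoot.mk g r := by
    intro r
    rw [show ρ (AdjoinRoot.mk f r) = ρ (AdjoinRoot.mk f r) from rfl]
    exact AdjoinRoot.aeval_eq r
  have hsurj : Function.Surjective ρ := by
    intro z
    obtain ⟨r, rfl⟩ := AdjoinRoot.mk_surjective z
    exact ⟨AdjoinRoot.mk f r, hρmk r⟩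
  have hker : LinearMap.ker ρ.toLinearMap = Ch := by
    ext z
    obtain ⟨r, rfl⟩ := AdjoinRoot.mk_surjective z
    rw [LinearMap.mem_ker]
    rw [show ρ.toLinearMap (AdjoinRoot.mk f r) = ρ (AdjoinRoot.mk f r) from rfl, hρmk,
      AdjoinRoot.mk_eq_zero, ← memJ, hJdef, Ideal.mem_comap]
    exact Iff.rfl
  have e1 : (AdjoinRoot f ⧸ Ch) ≃ₗ[F] AdjoinRoot g :=
    (Submodule.quotEquivOfEq Ch _ hker.symm).trans (ρ.toLinearMap.quotKerEquivOfSurjective hsurj)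
  have fdf : FiniteDimensional F (AdjoinRoot f) := Module.Finite.of_basis pb.basis
  have hnf : finrank F (AdjoinRoot f) = n := by
    rw [Module.finrank_eq_card_basis pb.basis, Fintype.card_fin, hdim]
  have hq : finrank F (AdjoinRoot f ⧸ Ch) + finrank F Ch = n := by
    rw [Submodule.finrank_quotient_add_finrank, hnf]
  have hng : finrank F (AdjoinRoot g) = g.natDegree := by
    rw [Module.finrank_eq_card_basis (AdjoinRoot.powerBasis hg0).basis, Fintype.card_fin]
    rfl
  have hChW : finrank F Ch = finrank F ↥W := by
    rw [hChdef]; exact LinearEquiv.finrank_map_eq Ψ W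
  have he1 := e1.finrank_eq
  exact ⟨g, hgf, by omega, hmemW⟩

/-- Dimension formula for the Galois dual. -/
lemma finrank_galoisDual (p k : ℕ) [Fact p.Prime] {F : Type*} [Field F] [Fintype F]
    [CharP F p] {n : ℕ} (W : Submodule F (Fin n → F)) :
    finrank F ↥W + finrank F ↥(galoisDual p k W) = n := by
  classical
  -- the dot-product bilinear form
  let B : LinearMap.BilinForm F (Fin n → F) := LinearMap.mk₂ F (fun x y => ∑ i, x i * y i)
    (fun a b y => by simp [add_mul, Finset.sum_add_distrib])
    (fun r a y => by simp [Finset.mul_sum, mul_assoc])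
    (fun a b y => by simp [mul_add, Finset.sum_add_distrib])
    (fun r a y => by
      simp only [smul_eq_mul, Finset.mul_sum, Pi.smul_apply]
      exact Finset.sum_congr rfl fun i _ => by ring)
  have hBapp : ∀ x y : Fin n → F, B x y = ∑ i, x i * y i := fun x y => rfl
  have hrefl : B.IsRefl := by
    intro x y h
    rw [hBapp] at h ⊢
    rw [← h]
    exact Finset.sum_congr rfl fun i _ => mul_comm _ _
  have hnd : B.Nondegenerate := by
    refine (LinearMap.IsRefl.nondegenerate_iff_separatingLeft hrefl).2 ?_
    intro x hx
    funext i
    have h := hx (Pi.single i 1)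
    rw [hBapp] at h
    simpa [Pi.single_apply, mul_ite, Finset.sum_ite_eq'] using h
  have horth : euclideanDual W = B.orthogonal W := by
    ext x
    exact Iff.rfl
  have hfr : finrank F (Fin n → F) = n := by simp
  have hED : finrank F ↥(euclideanDual W) = n - finrank F ↥W := by
    rw [horth, LinearMap.BilinForm.finrank_orthogonal hnd W, hfr]
  -- cardinality comparison via the Frobenius power map
  let φ : (Fin n → F) → (Fin n → F) := fun x i => x i ^ p ^ k
  have hφinj : Function.Injective φ := by
    intro a b h
    funext i
    have h2 : iterateFrobenius F p k (a i) = iterateFrobenius F p k (b i) := by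
      simpa [iterateFrobenius_def] using congrFun h i
    exact (iterateFrobenius F p k).injective h2
  have hφsurj : Function.Surjective φ := Finite.injective_iff_surjective.mp hφinj
  have himg : φ '' (galoisDual p k W : Set (Fin n → F)) = (euclideanDual W : Set (Fin n → F)) := by
    ext y
    constructor
    · rintro ⟨x, hx, rfl⟩
      intro c hc
      exact hx c hc
    · intro hy
      obtain ⟨x, rfl⟩ := hφsurj y
      exact ⟨x, fun c hc => hy c hc, rfl⟩
  have hcard : Nat.card ↥(galoisDual p k W) = Nat.card ↥(euclideanDual W) := by
    calc Nat.card ↥(galoisDual p k W)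
        = Nat.card ↥(φ '' (galoisDual p k W : Set (Fin n → F))) :=
          (Nat.card_image_of_injective hφinj (galoisDual p k W : Set (Fin n → F))).symm
      _ = Nat.card ↥(euclideanDual W : Set (Fin n → F)) := by rw [himg]
      _ = Nat.card ↥(euclideanDual W) := rfl
  haveI : Fintype ↥(galoisDual p k W) := Fintype.ofFinite _
  haveI : Fintype ↥(euclideanDual W) := Fintype.ofFinite _
  have hc1 : Fintype.card ↥(galoisDual p k W)
      = Fintype.card F ^ finrank F ↥(galoisDual p k W) := card_eq_pow_finrank
  have hc2 : Fintype.card ↥(euclideanDual W)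
      = Fintype.card F ^ finrank F ↥(euclideanDual W) := card_eq_pow_finrank
  have hcc : Fintype.card ↥(galoisDual p k W) = Fintype.card ↥(euclideanDual W) := by
    rw [← Nat.card_eq_fintype_card, ← Nat.card_eq_fintype_card, hcard]
  have hpows : Fintype.card F ^ finrank F ↥(galoisDual p k W)
      = Fintype.card F ^ finrank F ↥(euclideanDual W) := by rw [← hc1, ← hc2]; exact hcc
  have hfgd : finrank F ↥(galoisDual p k W) = finrank F ↥(euclideanDual W) :=
    Nat.pow_right_injective Fintype.one_lt_card hpows
  have hWle : finrank F ↥W ≤ n := by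
    have h := Submodule.finrank_le W
    rwa [hfr] at h
  -- the Euclidean dual of a nonzero? general: need finrank W + (n - finrank W) = n
  rw [hfgd, hED]
  omega

/-- The Galois dual of a `λ`-constacyclic code is `(λ^{p^{e-k}})⁻¹`-constacyclic. -/
lemma galoisDual_constacyclic (p e k : ℕ) [Fact p.Prime] (hk : k ≤ e)
    {F : Type*} [Field F] [Fintype F] [CharP F p] (hF : Fintype.card F = p ^ e)
    {n : ℕ} {lam : F} (hl : lam ≠ 0) {W : Submodule F (Fin n → F)}
    (hW : IsConstacyclic lam W) :
    IsConstacyclic ((lam ^ p ^ (e - k))⁻¹) (galoisDual p k W) := by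
  classical
  rcases Nat.eq_zero_or_pos n with hn0 | hn
  · subst hn0
    intro c hc
    have h : (fun i : Fin 0 => if (i : ℕ) = 0 then (lam ^ p ^ (e - k))⁻¹ *
        c ⟨0 - 1, by have := i.isLt; omega⟩ else c ⟨(i : ℕ) - 1, by have := i.isLt; omega⟩) = c :=
      funext fun i => i.elim0
    rw [h]
    exact hc
  obtain ⟨m, rfl⟩ : ∃ m, n = m + 1 := ⟨n - 1, by omega⟩
  have hmu : ((lam ^ p ^ (e - k))⁻¹) ^ p ^ k = lam⁻¹ := by
    rw [inv_pow, ← pow_mul]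
    have h : p ^ (e - k) * p ^ k = p ^ e := by rw [← pow_add]; congr 1; omega
    rw [h, ← hF, FiniteField.pow_card]
  intro x hx
  show ∀ c ∈ W, ∑ i, c i * (shiftFun (lam ^ p ^ (e - k))⁻¹ x) i ^ p ^ k = 0
  intro c hc
  obtain ⟨c', hc', rfl⟩ := shift_surjOn hl hW c hc
  have hx' := hx c' hc'
  rw [Fin.sum_univ_castSucc] at hx'
  rw [Fin.sum_univ_succ]
  have h0 : (shiftFun lam c') 0 * ((shiftFun (lam ^ p ^ (e - k))⁻¹ x) 0) ^ p ^ k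
      = c' (Fin.last m) * x (Fin.last m) ^ p ^ k := by
    simp only [shiftFun, Fin.val_zero, if_true, if_pos trivial]
    rw [mul_pow, hmu]
    have hl1 : (⟨m + 1 - 1, by omega⟩ : Fin (m+1)) = Fin.last m := rfl
    rw [hl1]
    field_simp
  have hterm : ∀ i : Fin m,
      (shiftFun lam c') i.succ * ((shiftFun (lam ^ p ^ (e - k))⁻¹ x) i.succ) ^ p ^ k
      = c' i.castSucc * x i.castSucc ^ p ^ k := by
    intro i
    simp only [shiftFun, Fin.val_succ, Nat.succ_ne_zero, if_false, Nat.add_sub_cancel]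
    rfl
  rw [h0]
  rw [Finset.sum_congr rfl fun i _ => hterm i]
  rw [add_comm]
  exact hx'

end AuxLCD

end AuxLCD
/-- Let `λ ∈ F_q^*` be a primitive `r`-th root of unity (`q = p^e`, `0 ≤ k < e`,
`gcd(n,q) = 1`).  If `λ^{1+p^{e-k}} ≠ 1` then every `λ`-constacyclic code `C` of
length `n` over `F_q` is a `k`-Galois LCD code. -/
theorem constacyclic_isGaloisLCD
    (p e k : ℕ) [Fact p.Prime] (hk : k < e)
    (F : Type*) [Field F] [Fintype F] [CharP F p]
    (hF : Fintype.card F = p ^ e)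
    {n : ℕ} (hn : Nat.Coprime n (p ^ e))
    (r : ℕ) (lam : F) (hlam : lam ≠ 0) (hr : orderOf lam = r)
    (h1 : lam ^ (1 + p ^ (e - k)) ≠ 1)
    (C : Submodule F (Fin n → F)) (hC : IsConstacyclic lam C) :
    IsGaloisLCD p k C := by
  classical
  have hp : 2 ≤ p := (Fact.out : p.Prime).two_le
  have hn0 : n ≠ 0 := by
    rintro rfl
    rw [Nat.coprime_zero_left] at hn
    have h2 : p ≤ p ^ e := Nat.le_self_pow (by omega) p
    omega
  have hnpos : 0 < n := Nat.pos_of_ne_zero hn0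
  set μ : F := (lam ^ p ^ (e - k))⁻¹ with hμ
  have hμ0 : μ ≠ 0 := inv_ne_zero (pow_ne_zero _ hlam)
  have hmune : μ ≠ lam := by
    intro h
    apply h1
    rw [pow_add, pow_one]
    nth_rewrite 1 [← h]
    rw [hμ, inv_mul_cancel₀ (pow_ne_zero _ hlam)]
  have hgd : IsConstacyclic μ (galoisDual p k C) :=
    AuxLCD.galoisDual_constacyclic p e k hk.le hF hlam hC
  obtain ⟨g, hgdvd, hgdeg, hgmem⟩ := AuxLCD.exists_gen hnpos lam C hC
  obtain ⟨g', hg'dvd, hg'deg, hg'mem⟩ := AuxLCD.exists_gen hnpos μ (galoisDual p k C) hgd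
  have hrk := AuxLCD.finrank_galoisDual p k C
  have hfne : (Polynomial.X ^ n - Polynomial.C lam : Polynomial F) ≠ 0 :=
    (Polynomial.monic_X_pow_sub_C _ hn0).ne_zero
  have hfne' : (Polynomial.X ^ n - Polynomial.C μ : Polynomial F) ≠ 0 :=
    (Polynomial.monic_X_pow_sub_C _ hn0).ne_zero
  have hg0 : g ≠ 0 := by rintro rfl; exact hfne (zero_dvd_iff.mp hgdvd)
  have hg'0 : g' ≠ 0 := by rintro rfl; exact hfne' (zero_dvd_iff.mp hg'dvd)
  have hcop : IsCoprime (Polynomial.X ^ n - Polynomial.C lam : Polynomial F)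
      (Polynomial.X ^ n - Polynomial.C μ) := by
    refine ⟨Polynomial.C (μ - lam)⁻¹, -(Polynomial.C (μ - lam)⁻¹), ?_⟩
    have hml : μ - lam ≠ 0 := sub_ne_zero.mpr hmune
    have hfactor : Polynomial.C (μ - lam)⁻¹ * (Polynomial.X ^ n - Polynomial.C lam)
        + -(Polynomial.C (μ - lam)⁻¹) * (Polynomial.X ^ n - Polynomial.C μ)
        = Polynomial.C (μ - lam)⁻¹ * (Polynomial.C μ - Polynomial.C lam) := by ring
    rw [hfactor, ← Polynomial.C_sub, ← Polynomial.C_mul, inv_mul_cancel₀ hml, Polynomial.C_1]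
  have hcopg : IsCoprime g g' :=
    (hcop.of_isCoprime_of_dvd_left hgdvd).of_isCoprime_of_dvd_right hg'dvd
  show C ⊓ galoisDual p k C = ⊥
  rw [eq_bot_iff]
  intro x hx
  rw [Submodule.mem_inf] at hx
  rw [Submodule.mem_bot]
  by_contra hx0
  have hpol0 : AuxLCD.pol x ≠ 0 := fun h =>
    hx0 (funext fun i => by rw [← AuxLCD.pol_coeff x i, h, Polynomial.coeff_zero]; rfl)
  have hdvd : g * g' ∣ AuxLCD.pol x :=
    hcopg.mul_dvd ((hgmem x).1 hx.1) ((hg'mem x).1 hx.2)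
  have hlt : (AuxLCD.pol x).natDegree < n := AuxLCD.natDegree_pol_lt hnpos x
  have hle : (g * g').natDegree ≤ (AuxLCD.pol x).natDegree :=
    Polynomial.natDegree_le_of_dvd hdvd hpol0
  rw [Polynomial.natDegree_mul hg0 hg'0] at hle
  omega
end
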